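/- arXiv:2306.10513 — 5 statements merged into one kernel-verified Lean document; each statement's English description precedes it below -/
import Mathlib

section
/- Let (s,i) be the solution of the controlled SIR system with control u and initial data i₀ ∈ (0,1), s₀ ∈ (0, 1−i₀]. Then: (1) s is strictly decreasing on [0,∞); (2) the limit s_∞ := lim_{t→∞} s(t) exists and lies in (0,1), and lim_{t→∞} i(t) = 0. -/
open MeasureTheory Filter Set intervalIntegral
open scoped ENNReal

noncomputable section

/-- A control: a measurable (essentially bounded) function with values in `[0, umax]`. -/
def IsControl (umax : ℝ) (u : ℝ → ℝ) : Prop :=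
  Measurable u ∧ ∀ t : ℝ, u t ∈ Set.Icc (0 : ℝ) umax

/-- Solution of the controlled SIR system on `[0,∞)`, in integral (i.e. locally absolutely
continuous) form: `s' = -(β-u)·s·i`, `i' = (β-u)·s·i - γ·i` a.e., `s 0 = s₀`, `i 0 = i₀`. -/
def SIRSol (β γ : ℝ) (u s i : ℝ → ℝ) (s₀ i₀ : ℝ) : Prop :=
  Continuous s ∧ Continuous i ∧
  (∀ t : ℝ, 0 ≤ t → s t = s₀ + ∫ τ in (0:ℝ)..t, -((β - u τ) * s τ * i τ)) ∧
  (∀ t : ℝ, 0 ≤ t → i t = i₀ + ∫ τ in (0:ℝ)..t, ((β - u τ) * s τ * i τ - γ * i τ))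

/-- Solution of the controlled SIR system on `[0,T]`, in integral form. -/
def SIRSolOn (β γ T : ℝ) (u s i : ℝ → ℝ) (s₀ i₀ : ℝ) : Prop :=
  ContinuousOn s (Set.Icc 0 T) ∧ ContinuousOn i (Set.Icc 0 T) ∧
  (∀ t ∈ Set.Icc (0:ℝ) T, s t = s₀ + ∫ τ in (0:ℝ)..t, -((β - u τ) * s τ * i τ)) ∧
  (∀ t ∈ Set.Icc (0:ℝ) T, i t = i₀ + ∫ τ in (0:ℝ)..t, ((β - u τ) * s τ * i τ - γ * i τ))

/-- The triangle `T = {(s,i) ∈ (0,1]² : s + i ≤ 1}`. -/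
def Triangle : Set (ℝ × ℝ) :=
  {p | 0 < p.1 ∧ p.1 ≤ 1 ∧ 0 < p.2 ∧ p.2 ≤ 1 ∧ p.1 + p.2 ≤ 1}

/-- The curve `Φ_max`. -/
def PhiMax (β γ umax iM : ℝ) (x : ℝ) : ℝ :=
  if x < γ / (β - umax) then iM
  else γ / (β - umax) + iM - x + (γ / (β - umax)) * (Real.log x - Real.log (γ / (β - umax)))

/-- The curve `Φ₀`. -/
def Phi0 (β γ iM : ℝ) (x : ℝ) : ℝ :=
  if x < γ / β then iM
  else γ / β + iM - x + (γ / β) * (Real.log x - Real.log (γ / β))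

/-- The ICU (state) constraint `i(t) ≤ i_M` for all `t ≥ 0`. -/
def Admissible (iM : ℝ) (i : ℝ → ℝ) : Prop := ∀ t : ℝ, 0 ≤ t → i t ≤ iM

/-- Infinite-horizon cost `J^∞(u) = ∫₀^∞ (λ₁ u + λ₂ i) dt`, with values in `[0,∞]`. -/
def Cost (l1 l2 : ℝ) (u i : ℝ → ℝ) : ℝ≥0∞ :=
  ∫⁻ t in Set.Ioi (0:ℝ), ENNReal.ofReal (l1 * u t + l2 * i t)

/-- Finite-horizon cost `J^T(u) = ∫₀^T (λ₁ u + λ₂ i) dt`. -/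
def CostT (l1 l2 T : ℝ) (u i : ℝ → ℝ) : ℝ≥0∞ :=
  ∫⁻ t in Set.Ioc (0:ℝ) T, ENNReal.ofReal (l1 * u t + l2 * i t)

/-- The safe (no-effort) zone `A`. -/
def SafeZone (β γ iM : ℝ) : Set (ℝ × ℝ) :=
  {p | p ∈ Triangle ∧ ∃ s i : ℝ → ℝ,
    SIRSol β γ (fun _ => 0) s i p.1 p.2 ∧ Admissible iM i}

/-- The viable (feasible) set `B`. -/
def ViableSet (β γ umax iM : ℝ) : Set (ℝ × ℝ) :=
  {p | p ∈ Triangle ∧ ∃ u s i : ℝ → ℝ, IsControl umax u ∧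
    SIRSol β γ u s i p.1 p.2 ∧ Admissible iM i}

/-- Weak* convergence in `L^∞(0,∞)`: testing against every `L¹` function. -/
def WeakStarLim (un : ℕ → ℝ → ℝ) (u : ℝ → ℝ) : Prop :=
  ∀ g : ℝ → ℝ, MeasureTheory.IntegrableOn g (Set.Ioi 0) →
    Filter.Tendsto (fun n => ∫ t in Set.Ioi (0:ℝ), un n t * g t) Filter.atTop
      (nhds (∫ t in Set.Ioi (0:ℝ), u t * g t))

lemma myIntInt {f : ℝ → ℝ} (hf : Measurable f) {a b M : ℝ}
    (hM : ∀ x ∈ Set.uIcc a b, |f x| ≤ M) : IntervalIntegrable f volume a b := by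
  rw [intervalIntegrable_iff]
  refine MeasureTheory.Integrable.mono' (g := fun _ => M)
    (integrableOn_const ?_) hf.aestronglyMeasurable.restrict ?_
  · rw [Set.uIoc]; exact measure_Ioc_lt_top.ne
  · filter_upwards [ae_restrict_mem measurableSet_uIoc] with x hx
    exact hM x (Set.uIoc_subset_uIcc hx)

lemma pos_of_integral_bound {h g : ℝ → ℝ} {C T : ℝ} (hC : 0 ≤ C)
    (hcont : Continuous h)
    (hgint : ∀ t1 t2 : ℝ, IntervalIntegrable g volume t1 t2)
    (heq : ∀ t ∈ Set.Icc (0:ℝ) T, h t = h 0 + ∫ τ in (0:ℝ)..t, g τ)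
    (hbound : ∀ τ ∈ Set.Icc (0:ℝ) T, 0 ≤ h τ → |g τ| ≤ C * h τ)
    (h0 : 0 < h 0) : ∀ t ∈ Set.Icc (0:ℝ) T, 0 < h t := by
  intro t0 ht0
  by_contra hneg
  push_neg at hneg
  set S : Set ℝ := Icc 0 t0 ∩ h ⁻¹' (Iic 0) with hSdef
  have hScl : IsClosed S := isClosed_Icc.inter (isClosed_Iic.preimage hcont)
  have hSne : S.Nonempty := ⟨t0, ⟨ht0.1, le_refl _⟩, hneg⟩
  have hSbdd : BddBelow S := (bddBelow_Icc).mono inter_subset_left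
  set ts := sInf S with hts
  have htsS : ts ∈ S := hScl.csInf_mem hSne hSbdd
  have hts0 : 0 ≤ ts := htsS.1.1
  have htst0 : ts ≤ t0 := htsS.1.2
  have htsT : ts ≤ T := le_trans htst0 ht0.2
  have htspos : 0 < ts := by
    rcases lt_or_eq_of_le hts0 with hl | he
    · exact hl
    · exfalso; have : h ts ≤ 0 := htsS.2; rw [← he] at this; linarith
  have hlt : ∀ τ, 0 ≤ τ → τ < ts → 0 < h τ := by
    intro τ hτ0 hτts
    by_contra hhh
    push_neg at hhh
    have : τ ∈ S := ⟨⟨hτ0, le_trans hτts.le htst0⟩, hhh⟩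
    exact absurd (csInf_le hSbdd this) (not_le.2 hτts)
  have htsnn : 0 ≤ h ts := by
    have htd : Tendsto h (nhdsWithin ts (Iio ts)) (nhds (h ts)) :=
      (hcont.tendsto ts).mono_left nhdsWithin_le_nhds
    refine ge_of_tendsto htd ?_
    filter_upwards [Ioo_mem_nhdsLT_of_mem (Set.mem_Ioc.2 ⟨htspos, le_refl ts⟩)] with x hx
    exact (hlt x hx.1.le hx.2).le
  have hnn : ∀ τ ∈ Icc (0:ℝ) ts, 0 ≤ h τ := by
    intro τ hτ
    rcases lt_or_eq_of_le hτ.2 with hl | he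
    · exact (hlt τ hτ.1 hl).le
    · rw [he]; exact htsnn
  have hts00 : h ts = 0 := le_antisymm htsS.2 htsnn
  set φ : ℝ → ℝ := fun r => h (ts - r) with hφdef
  set Φ : ℝ → ℝ := fun r => ∫ σ in (0:ℝ)..r, φ σ with hΦdef
  have hφcont : Continuous φ := hcont.comp (continuous_const.sub continuous_id)
  have hφnn : ∀ r ∈ Icc (0:ℝ) ts, 0 ≤ φ r := fun r hr =>
    hnn (ts - r) ⟨by linarith [hr.2], by linarith [hr.1]⟩
  have hkey : ∀ r ∈ Icc (0:ℝ) ts, φ r ≤ C * Φ r := by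
    intro r hr
    have hmem1 : ts - r ∈ Icc (0:ℝ) T := ⟨by linarith [hr.2], by linarith [hr.1]⟩
    have hmem2 : ts ∈ Icc (0:ℝ) T := ⟨hts0, htsT⟩
    have hadj := integral_add_adjacent_intervals (μ := volume) (f := g)
      (hgint 0 (ts - r)) (hgint (ts - r) ts)
    have h1 : φ r = - ∫ τ in (ts - r)..ts, g τ := by
      have e1 := heq (ts - r) hmem1
      have e2 := heq ts hmem2
      rw [hts00] at e2
      simp only [hφdef]
      linarith
    have h2 : - ∫ τ in (ts - r)..ts, g τ ≤ ∫ τ in (ts - r)..ts, C * h τ := by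
      rw [← intervalIntegral.integral_neg]
      apply integral_mono_on (by linarith [hr.1]) (hgint _ _).neg
        ((continuous_const.mul hcont).intervalIntegrable _ _)
      intro x hx
      simp only [Pi.neg_apply, Pi.mul_apply]
      have hx' : x ∈ Icc (0:ℝ) ts := ⟨by linarith [hx.1, hr.2], hx.2⟩
      have hxnn := hnn x hx'
      have hb := hbound x ⟨hx'.1, le_trans hx'.2 htsT⟩ hxnn
      have := neg_le_abs (g x)
      linarith
    have h3 : ∫ τ in (ts - r)..ts, C * h τ = C * Φ r := by
      rw [intervalIntegral.integral_const_mul]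
      congr 1
      have hcs := intervalIntegral.integral_comp_sub_left (a := (0:ℝ)) (b := r) h ts
      simp only [sub_zero] at hcs
      simp only [hΦdef, hφdef]
      rw [hcs]
    rw [h1, ← h3]
    exact h2
  have hΦderiv : ∀ r : ℝ, HasDerivAt Φ (φ r) r := fun r =>
    (hφcont.integral_hasStrictDerivAt 0 r).hasDerivAt
  set G : ℝ → ℝ := fun r => Φ r * Real.exp (-C * r) with hGdef
  have hGderiv : ∀ r : ℝ, HasDerivAt G ((φ r - C * Φ r) * Real.exp (-C * r)) r := by
    intro r
    have h2 : HasDerivAt (fun x : ℝ => Real.exp (-C * x)) (Real.exp (-C * r) * (-C)) r := by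
      have := ((hasDerivAt_id r).const_mul (-C)).exp
      simpa [mul_comm] using this
    have := (hΦderiv r).mul h2
    rw [show (φ r - C * Φ r) * Real.exp (-C * r) = φ r * Real.exp (-C * r) + Φ r * (Real.exp (-C * r) * -C) by ring]
    exact this
  have hΦcont : Continuous Φ := continuous_iff_continuousAt.2 fun r => (hΦderiv r).continuousAt
  have hGanti : AntitoneOn G (Icc 0 ts) := by
    apply antitoneOn_of_deriv_nonpos (convex_Icc _ _)
    · exact (hΦcont.mul (Real.continuous_exp.comp (continuous_const.mul continuous_id))).continuousOn
    · exact fun x _ => ((hGderiv x).differentiableAt).differentiableWithinAt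
    · intro x hx
      rw [interior_Icc] at hx
      rw [(hGderiv x).deriv]
      have hk := hkey x ⟨hx.1.le, hx.2.le⟩
      exact mul_nonpos_of_nonpos_of_nonneg (by linarith) (Real.exp_pos _).le
  have hΦ00 : Φ 0 = 0 := by simp [hΦdef]
  have hφzero : ∀ r ∈ Icc (0:ℝ) ts, φ r = 0 := by
    intro r hr
    have hG : G r ≤ G 0 := hGanti (left_mem_Icc.2 hts0) hr hr.1
    have hG0 : G 0 = 0 := by simp [hGdef, hΦ00]
    have hexp := Real.exp_pos (-C * r)
    have hΦr : Φ r ≤ 0 := by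
      rw [hG0] at hG
      simp only [hGdef] at hG
      by_contra hcon
      push_neg at hcon
      nlinarith [hG]
    have hΦrnn : 0 ≤ Φ r := by
      apply intervalIntegral.integral_nonneg hr.1
      intro x hx
      exact hφnn x ⟨hx.1, le_trans hx.2 hr.2⟩
    have hΦr0 : Φ r = 0 := le_antisymm hΦr hΦrnn
    have := hkey r hr
    rw [hΦr0] at this
    simp at this
    exact le_antisymm this (hφnn r hr)
  have hend := hφzero ts ⟨hts0, le_refl _⟩
  simp only [hφdef, sub_self] at hend
  linarith

/-- `s` is strictly decreasing on `[0,∞)`; `s` has a limit `s_∞ ∈ (0,1)` at infinity and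
`i(t) → 0` as `t → ∞`. -/
theorem statement2 (β γ umax : ℝ) (hβ : 0 < β) (hγ : 0 < γ)
    (humax : 0 < umax) (humaxβ : umax < β)
    (u : ℝ → ℝ) (hu : IsControl umax u)
    (i₀ s₀ : ℝ) (hi₀ : i₀ ∈ Set.Ioo (0:ℝ) 1) (hs₀ : s₀ ∈ Set.Ioc (0:ℝ) (1 - i₀))
    (s i : ℝ → ℝ) (hsol : SIRSol β γ u s i s₀ i₀) :
    StrictAntiOn s (Set.Ici 0) ∧
    (∃ sInf ∈ Set.Ioo (0:ℝ) 1, Filter.Tendsto s Filter.atTop (nhds sInf)) ∧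
    Filter.Tendsto i Filter.atTop (nhds 0) := by
  obtain ⟨humeas, hurange⟩ := hu
  obtain ⟨hscont, hicont, hseq, hieq⟩ := hsol
  obtain ⟨hi₀pos, hi₀lt⟩ := hi₀
  obtain ⟨hs₀pos, hs₀le⟩ := hs₀
  set f : ℝ → ℝ := fun τ => (β - u τ) * s τ * i τ with hfdef
  have hfmeas : Measurable f :=
    ((measurable_const.sub humeas).mul hscont.measurable).mul hicont.measurable
  have habsu : ∀ τ : ℝ, |β - u τ| ≤ β := by
    intro τ
    have h1 := (hurange τ).1
    have h2 := (hurange τ).2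
    rw [abs_le]; constructor <;> linarith
  have hfint : ∀ a b : ℝ, IntervalIntegrable f volume a b := by
    intro a b
    obtain ⟨M, hM⟩ := (isCompact_uIcc (a := a) (b := b)).exists_bound_of_continuousOn
      ((hscont.mul hicont).continuousOn)
    refine myIntInt hfmeas (M := β * M) ?_
    intro x hx
    have h1 : |f x| = |β - u x| * |s x * i x| := by
      simp only [hfdef]
      rw [mul_assoc, abs_mul]
    rw [h1]
    have h2 := hM x hx
    simp only [Real.norm_eq_abs, Pi.mul_apply] at h2
    have h3 := abs_nonneg (β - u x)
    have h4 := abs_nonneg (s x * i x)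
    nlinarith [habsu x]
  have hgint : ∀ a b : ℝ, IntervalIntegrable (fun τ => f τ - γ * i τ) volume a b := by
    intro a b
    exact (hfint a b).sub ((continuous_const.mul hicont).intervalIntegrable a b)
  have hs0 : s 0 = s₀ := by
    have := hseq 0 le_rfl; simpa using this
  have hi0 : i 0 = i₀ := by
    have := hieq 0 le_rfl; simpa using this
  -- positivity
  have hpos : ∀ t : ℝ, 0 ≤ t → 0 < s t ∧ 0 < i t := by
    intro t ht
    obtain ⟨Ms, hMs⟩ := (isCompact_Icc (a := (0:ℝ)) (b := t)).exists_bound_of_continuousOn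
      hscont.continuousOn
    obtain ⟨Mi, hMi⟩ := (isCompact_Icc (a := (0:ℝ)) (b := t)).exists_bound_of_continuousOn
      hicont.continuousOn
    have hMs0 : 0 ≤ Ms := le_trans (norm_nonneg (s 0)) (hMs 0 ⟨le_rfl, ht⟩)
    have hMi0 : 0 ≤ Mi := le_trans (norm_nonneg (i 0)) (hMi 0 ⟨le_rfl, ht⟩)
    constructor
    · refine pos_of_integral_bound (g := fun τ => -(f τ)) (C := β * Mi)
        (by positivity) hscont (fun a b => (hfint a b).neg) ?_ ?_ (by rw [hs0]; exact hs₀pos)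
        t ⟨ht, le_rfl⟩
      · intro r hr; rw [hs0]; exact hseq r hr.1
      · intro τ hτ hsτ
        have h2 := hMi τ hτ
        simp only [Real.norm_eq_abs] at h2
        have h1 : |(-(f τ))| = |β - u τ| * |s τ| * |i τ| := by
          simp only [hfdef, abs_neg, abs_mul]
        rw [h1, abs_of_nonneg hsτ]
        calc |β - u τ| * s τ * |i τ| ≤ β * s τ * |i τ| :=
              mul_le_mul_of_nonneg_right
                (mul_le_mul_of_nonneg_right (habsu τ) hsτ) (abs_nonneg _)
          _ ≤ β * s τ * Mi := by
              exact mul_le_mul_of_nonneg_left h2 (mul_nonneg hβ.le hsτ)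
          _ = β * Mi * s τ := by ring
    · refine pos_of_integral_bound (g := fun τ => f τ - γ * i τ) (C := β * Ms + γ)
        (by positivity) hicont hgint ?_ ?_ (by rw [hi0]; exact hi₀pos)
        t ⟨ht, le_rfl⟩
      · intro r hr; rw [hi0]; exact hieq r hr.1
      · intro τ hτ hiτ
        have h2 := hMs τ hτ
        simp only [Real.norm_eq_abs] at h2
        have h1 : |f τ - γ * i τ| ≤ |β - u τ| * |s τ| * |i τ| + γ * |i τ| := by
          refine le_trans (abs_sub _ _) ?_
          simp only [hfdef, abs_mul]
          rw [abs_of_nonneg hγ.le]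
        rw [abs_of_nonneg hiτ] at h1
        have h3 : |β - u τ| * |s τ| * i τ ≤ β * Ms * i τ := by
          refine mul_le_mul_of_nonneg_right ?_ hiτ
          exact mul_le_mul (habsu τ) h2 (abs_nonneg _) hβ.le
        calc |f τ - γ * i τ| ≤ |β - u τ| * |s τ| * i τ + γ * i τ := h1
          _ ≤ β * Ms * i τ + γ * i τ := by linarith
          _ = (β * Ms + γ) * i τ := by ring

  -- difference formula for s
  have hsdiff : ∀ t1 t2 : ℝ, 0 ≤ t1 → t1 ≤ t2 → s t1 - s t2 = ∫ τ in t1..t2, f τ := by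
    intro t1 t2 h1 h12
    have e1 := hseq t1 h1
    have e2 := hseq t2 (le_trans h1 h12)
    have hadj := integral_add_adjacent_intervals (μ := volume) (f := f)
      (hfint 0 t1) (hfint t1 t2)
    have hn1 : (∫ τ in (0:ℝ)..t1, -((β - u τ) * s τ * i τ)) = -∫ τ in (0:ℝ)..t1, f τ := by
      rw [← intervalIntegral.integral_neg]
    have hn2 : (∫ τ in (0:ℝ)..t2, -((β - u τ) * s τ * i τ)) = -∫ τ in (0:ℝ)..t2, f τ := by
      rw [← intervalIntegral.integral_neg]
    rw [hn1] at e1; rw [hn2] at e2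
    linarith
  have hfpos : ∀ x : ℝ, 0 ≤ x → 0 < f x := by
    intro x hx
    have h1 := (hurange x).2
    have := hpos x hx
    have hux : 0 < β - u x := by linarith
    simp only [hfdef]
    exact mul_pos (mul_pos hux this.1) this.2
  have hanti : StrictAntiOn s (Set.Ici 0) := by
    intro t1 ht1 t2 ht2 h12
    have hd := hsdiff t1 t2 ht1 h12.le
    have hp : 0 < ∫ τ in t1..t2, f τ :=
      intervalIntegral_pos_of_pos_on (hfint t1 t2)
        (fun x hx => hfpos x (le_trans ht1 hx.1.le)) h12
    linarith
  have hantile : AntitoneOn s (Set.Ici 0) := hanti.antitoneOn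
  -- cumulative infection mass
  set Ψ : ℝ → ℝ := fun t => ∫ τ in (0:ℝ)..(max t 0), i τ with hΨdef
  have hΨeq : ∀ t : ℝ, 0 ≤ t → Ψ t = ∫ τ in (0:ℝ)..t, i τ := by
    intro t ht; simp only [hΨdef]; rw [max_eq_left ht]
  have hΨ0 : Ψ 0 = 0 := by simp [hΨdef]
  have hΨcont : Continuous Ψ := by
    have h1 : Continuous (fun x : ℝ => ∫ τ in (0:ℝ)..x, i τ) :=
      continuous_iff_continuousAt.2 fun x =>
        ((hicont.integral_hasStrictDerivAt 0 x).hasDerivAt).continuousAt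
    exact h1.comp (continuous_id.max continuous_const)
  have hΨdiff : ∀ t1 t2 : ℝ, 0 ≤ t1 → t1 ≤ t2 → Ψ t2 - Ψ t1 = ∫ τ in t1..t2, i τ := by
    intro t1 t2 h1 h12
    rw [hΨeq t1 h1, hΨeq t2 (le_trans h1 h12)]
    have hadj := integral_add_adjacent_intervals (μ := volume) (f := i)
      (hicont.intervalIntegrable 0 t1) (hicont.intervalIntegrable t1 t2)
    linarith
  have hΨmono : Monotone Ψ := by
    intro a b hab
    have h1 : max a 0 ≤ max b 0 := max_le_max hab le_rfl
    have h2 := hΨdiff (max a 0) (max b 0) (le_max_right _ _) h1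
    have h3 : 0 ≤ ∫ τ in (max a 0)..(max b 0), i τ := by
      apply intervalIntegral.integral_nonneg h1
      intro x hx
      exact (hpos x (le_trans (le_max_right a 0) hx.1)).2.le
    have h4 : Ψ (max a 0) = Ψ a := by
      simp only [hΨdef]; rw [max_eq_left (le_max_right a 0)]
    have h5 : Ψ (max b 0) = Ψ b := by
      simp only [hΨdef]; rw [max_eq_left (le_max_right b 0)]
    rw [h4, h5] at h2
    linarith
  have hΨnn : ∀ t : ℝ, 0 ≤ Ψ t := by
    intro t
    simp only [hΨdef]
    apply intervalIntegral.integral_nonneg (le_max_right t 0)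
    intro x hx
    exact (hpos x hx.1).2.le
  -- sum identity
  have hsum : ∀ t : ℝ, 0 ≤ t → s t + i t = s₀ + i₀ - γ * Ψ t := by
    intro t ht
    rw [hΨeq t ht, hseq t ht, hieq t ht]
    have hadd := intervalIntegral.integral_add (μ := volume)
      (f := fun τ => -((β - u τ) * s τ * i τ)) (g := fun τ => (β - u τ) * s τ * i τ - γ * i τ)
      (hfint 0 t).neg (hgint 0 t)
    have hfun : (fun τ => -((β - u τ) * s τ * i τ) + ((β - u τ) * s τ * i τ - γ * i τ))
        = fun τ => -(γ * i τ) := by funext τ; ring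
    rw [hfun] at hadd
    rw [intervalIntegral.integral_neg, intervalIntegral.integral_const_mul] at hadd
    linarith
  set K : ℝ := (s₀ + i₀) / γ with hKdef
  have hKpos : 0 < K := by positivity
  have hKb : ∀ t : ℝ, Ψ t ≤ K := by
    intro t
    have h1 := hsum (max t 0) (le_max_right t 0)
    have h2 := hpos (max t 0) (le_max_right t 0)
    have h3 : Ψ (max t 0) = Ψ t := by
      simp only [hΨdef]; rw [max_eq_left (le_max_right t 0)]
    rw [h3] at h1
    rw [hKdef, le_div_iff₀ hγ]
    nlinarith [h2.1, h2.2]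

  -- half-step estimate
  have hhalf : ∀ t1 t2 : ℝ, 0 ≤ t1 → t1 ≤ t2 →
      s t1 * (1 - β * (Ψ t2 - Ψ t1)) ≤ s t2 := by
    intro t1 t2 h1 h12
    have hd := hsdiff t1 t2 h1 h12
    have hΨd := hΨdiff t1 t2 h1 h12
    have hle : (∫ τ in t1..t2, f τ) ≤ ∫ τ in t1..t2, β * s t1 * i τ := by
      apply integral_mono_on h12 (hfint t1 t2)
        ((continuous_const.mul hicont).intervalIntegrable t1 t2)
      intro x hx
      have hx0 : 0 ≤ x := le_trans h1 hx.1
      have hxp := hpos x hx0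
      have hsle : s x ≤ s t1 := hantile h1 hx0 hx.1
      have hux1 := (hurange x).1
      have hux2 := (hurange x).2
      simp only [hfdef]
      calc (β - u x) * s x * i x ≤ β * s x * i x := by
            apply mul_le_mul_of_nonneg_right _ hxp.2.le
            exact mul_le_mul_of_nonneg_right (by linarith) hxp.1.le
        _ ≤ β * s t1 * i x := by
            apply mul_le_mul_of_nonneg_right _ hxp.2.le
            exact mul_le_mul_of_nonneg_left hsle hβ.le
    rw [intervalIntegral.integral_const_mul, ← hΨd] at hle
    nlinarith [hle, hd]
  -- inductive lower bound for s
  have hkey : ∀ n : ℕ, ∀ t : ℝ, 0 ≤ t → Ψ t ≤ n / (2 * β) → s₀ * (1/2)^n ≤ s t := by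
    intro n
    induction n with
    | zero =>
      intro t ht hΨt
      have ht0 : t = 0 := by
        by_contra hne
        have htpos : 0 < t := lt_of_le_of_ne ht (Ne.symm hne)
        have hP : 0 < Ψ t := by
          rw [hΨeq t ht]
          exact intervalIntegral_pos_of_pos_on (hicont.intervalIntegrable 0 t)
            (fun x hx => (hpos x hx.1.le).2) htpos
        simp only [Nat.cast_zero, zero_div] at hΨt
        linarith
      rw [ht0, hs0]
      simp
    | succ n ih =>
      intro t ht hΨt
      have hhalfpow : s₀ * (1/2)^(n+1) ≤ s₀ * (1/2)^n := by
        have : ((1:ℝ)/2)^(n+1) ≤ (1/2)^n := by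
          apply pow_le_pow_of_le_one (by norm_num) (by norm_num)
          omega
        nlinarith [hs₀pos]
      by_cases hc : Ψ t ≤ n / (2 * β)
      · exact le_trans hhalfpow (ih t ht hc)
      · push_neg at hc
        have hmem : (n / (2 * β) : ℝ) ∈ Icc (Ψ 0) (Ψ t) := by
          rw [hΨ0]
          exact ⟨by positivity, hc.le⟩
        obtain ⟨t1, ht1mem, ht1⟩ := intermediate_value_Icc ht hΨcont.continuousOn hmem
        have h1 := ih t1 ht1mem.1 ht1.le
        have h2 := hhalf t1 t ht1mem.1 ht1mem.2
        have h3 : Ψ t - Ψ t1 ≤ 1 / (2 * β) := by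
          rw [ht1]
          push_cast at hΨt
          have : (n : ℝ) / (2 * β) + 1 / (2 * β) = ((n : ℝ) + 1) / (2 * β) := by
            field_simp
          linarith
        have hst1 : 0 < s t1 := (hpos t1 ht1mem.1).1
        have h4 : (1:ℝ)/2 ≤ 1 - β * (Ψ t - Ψ t1) := by
          have hb : β * (Ψ t - Ψ t1) ≤ β * (1 / (2*β)) :=
            mul_le_mul_of_nonneg_left h3 hβ.le
          have : β * (1 / (2*β)) = 1/2 := by field_simp
          linarith
        calc s₀ * (1/2)^(n+1) = (s₀ * (1/2)^n) * (1/2) := by ring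
          _ ≤ s t1 * (1/2) := by nlinarith
          _ ≤ s t1 * (1 - β * (Ψ t - Ψ t1)) := by nlinarith
          _ ≤ s t := h2
  obtain ⟨N, hN⟩ := exists_nat_ge (2 * β * K)
  have hKN : K ≤ N / (2 * β) := by
    rw [le_div_iff₀ (by positivity)]
    linarith
  set c : ℝ := s₀ * (1/2)^N with hcdef
  have hcpos : 0 < c := by positivity
  have hclow : ∀ t : ℝ, 0 ≤ t → c ≤ s t := fun t ht =>
    hkey N t ht (le_trans (hKb t) hKN)
  -- limit of s
  set stilde : ℝ → ℝ := fun t => s (max t 0) with hstdef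
  have hstanti : Antitone stilde := by
    intro a b hab
    simp only [hstdef]
    have h1 : max a 0 ≤ max b 0 := max_le_max hab le_rfl
    rcases eq_or_lt_of_le h1 with he | hl
    · rw [he]
    · exact (hanti (le_max_right a 0) (le_max_right b 0) hl).le
  have hstbdd : BddBelow (Set.range stilde) := by
    refine ⟨c, ?_⟩
    rintro y ⟨t, rfl⟩
    exact hclow (max t 0) (le_max_right t 0)
  have hstlim : Tendsto stilde atTop (nhds (⨅ t, stilde t)) :=
    tendsto_atTop_ciInf hstanti hstbdd
  set sInf : ℝ := ⨅ t, stilde t with hsInfdef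
  have hseqev : stilde =ᶠ[atTop] s := by
    filter_upwards [eventually_ge_atTop (0:ℝ)] with t ht
    simp only [hstdef]
    rw [max_eq_left ht]
  have hslim : Tendsto s atTop (nhds sInf) := hstlim.congr' hseqev
  have hsInfpos : 0 < sInf := by
    refine lt_of_lt_of_le hcpos (le_ciInf ?_)
    intro t
    exact hclow (max t 0) (le_max_right t 0)
  have hsInflt : sInf < 1 := by
    have h1 : sInf ≤ stilde 0 := ciInf_le hstbdd 0
    have h2 : stilde 0 = s₀ := by simp only [hstdef]; rw [max_self, hs0]
    linarith

  -- limit of i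
  have hΨbdd : BddAbove (Set.range Ψ) := ⟨K, by rintro y ⟨t, rfl⟩; exact hKb t⟩
  have hΨlim : Tendsto Ψ atTop (nhds (⨆ t, Ψ t)) := tendsto_atTop_ciSup hΨmono hΨbdd
  set ΨM : ℝ := ⨆ t, Ψ t with hΨMdef
  set L : ℝ := s₀ + i₀ - γ * ΨM - sInf with hLdef
  have hilim : Tendsto i atTop (nhds L) := by
    have h1 : Tendsto (fun t => s₀ + i₀ - γ * Ψ t - s t) atTop (nhds L) := by
      rw [hLdef]
      exact ((tendsto_const_nhds.sub (hΨlim.const_mul γ)).sub hslim)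
    refine h1.congr' ?_
    filter_upwards [eventually_ge_atTop (0:ℝ)] with t ht
    have := hsum t ht
    linarith
  have hLnn : 0 ≤ L := by
    refine ge_of_tendsto hilim ?_
    filter_upwards [eventually_ge_atTop (0:ℝ)] with t ht
    exact (hpos t ht).2.le
  have hLz : L = 0 := by
    by_contra hne
    have hLpos : 0 < L := lt_of_le_of_ne hLnn (Ne.symm hne)
    have hev : ∀ᶠ t in atTop, L / 2 < i t ∧ (0:ℝ) ≤ t :=
      (hilim.eventually (eventually_gt_nhds (by linarith : L/2 < L))).and
        (eventually_ge_atTop 0)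
    obtain ⟨T, hT⟩ := eventually_atTop.1 hev
    set T1 : ℝ := max T 0 with hT1def
    set T2 : ℝ := T1 + (2 * K + 2) / L with hT2def
    have hT12 : T1 ≤ T2 := by
      have : 0 < (2 * K + 2) / L := by positivity
      rw [hT2def]; linarith
    have hT1nn : 0 ≤ T1 := le_max_right T 0
    have hd := hΨdiff T1 T2 hT1nn hT12
    have hge : (T2 - T1) * (L/2) ≤ ∫ τ in T1..T2, i τ := by
      have := integral_mono_on (μ := volume) (f := fun _ => L/2) (g := i) hT12
        (intervalIntegrable_const) (hicont.intervalIntegrable T1 T2) ?_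
      · rw [intervalIntegral.integral_const] at this
        simpa [smul_eq_mul] using this
      · intro x hx
        have hxT : T ≤ x := le_trans (le_max_left T 0) hx.1
        exact (hT x hxT).1.le
    have hcomp : (T2 - T1) * (L/2) = K + 1 := by
      rw [hT2def]
      field_simp
      ring
    have h1 := hKb T2
    have h2 := hΨnn T1
    rw [hcomp] at hge
    linarith
  have hilim0 : Tendsto i atTop (nhds 0) := hLz ▸ hilim
  exact ⟨hanti, ⟨sInf, ⟨hsInfpos, hsInflt⟩, hslim⟩, hilim0⟩
end
end

section
/- Let (s,i) be the solution of the controlled SIR system with control u and initial data i₀ ∈ (0,1), s₀ ∈ (0, 1−i₀]. If u is Lebesgue integrable on (0,∞) (i.e. ∫₀^∞ u(t) dt < ∞), then s_∞ := lim_{t→∞} s(t) satisfies s_∞ < γ/β. -/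
open MeasureTheory Filter Set intervalIntegral
open scoped ENNReal

noncomputable section

/-- Backward Gronwall with zero constant: a nonnegative continuous function dominated by
`C` times its own integral from `t` to `b` vanishes. -/
lemma gronwall_zero {f : ℝ → ℝ} {a b C : ℝ} (hab : a ≤ b) (hC : 0 ≤ C)
    (hf : ContinuousOn f (Icc a b)) (hpos : ∀ t ∈ Icc a b, 0 ≤ f t)
    (hineq : ∀ t ∈ Icc a b, f t ≤ C * ∫ τ in t..b, f τ) :
    ∀ t ∈ Icc a b, f t = 0 := by
  obtain ⟨M, hM⟩ : ∃ M, ∀ t ∈ Icc a b, f t ≤ M := by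
    obtain ⟨M, hM⟩ := (isCompact_Icc.image_of_continuousOn hf).bddAbove
    exact ⟨M, fun t ht => hM ⟨t, ht, rfl⟩⟩
  have hM0 : 0 ≤ M := le_trans (hpos a ⟨le_refl a, hab⟩) (hM a ⟨le_refl a, hab⟩)
  have hint : ∀ t ∈ Icc a b, IntervalIntegrable f volume t b := by
    intro t ht
    exact (hf.mono (Icc_subset_Icc ht.1 le_rfl)).intervalIntegrable_of_Icc ht.2
  have key : ∀ n : ℕ, ∀ t ∈ Icc a b, f t ≤ M * (C * (b - t)) ^ n / n.factorial := by
    intro n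
    induction n with
    | zero => intro t ht; simpa using hM t ht
    | succ n ih =>
      intro t ht
      have h1 : f t ≤ C * ∫ τ in t..b, f τ := hineq t ht
      have h2 : (∫ τ in t..b, f τ) ≤ ∫ τ in t..b, M * (C * (b - τ)) ^ n / n.factorial := by
        apply intervalIntegral.integral_mono_on ht.2 (hint t ht)
        · apply Continuous.intervalIntegrable
          continuity
        · intro τ hτ; exact ih τ ⟨le_trans ht.1 hτ.1, hτ.2⟩
      have h3 : (∫ τ in t..b, M * (C * (b - τ)) ^ n / n.factorial)
          = M * C ^ n / n.factorial * ∫ τ in t..b, (b - τ) ^ n := by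
        rw [← intervalIntegral.integral_const_mul]
        congr 1; ext τ; rw [mul_pow]; ring
      have h4 : (∫ τ in t..b, (b - τ) ^ n) = (b - t) ^ (n + 1) / (n + 1) := by
        have := intervalIntegral.integral_comp_sub_left (a := t) (b := b)
          (fun x => x ^ n) b
        rw [this]
        simp [integral_pow]
      calc f t ≤ C * ∫ τ in t..b, f τ := h1
        _ ≤ C * (M * C ^ n / n.factorial * ((b - t) ^ (n + 1) / (n + 1))) := by
            have h5 := h2
            rw [h3, h4] at h5
            exact mul_le_mul_of_nonneg_left h5 hC
        _ = M * (C * (b - t)) ^ (n + 1) / (n + 1).factorial := by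
            have hfac : (0:ℝ) < n.factorial := by exact_mod_cast n.factorial_pos
            rw [mul_pow, Nat.factorial_succ]
            push_cast
            field_simp
            ring
  intro t ht
  have hbt : 0 ≤ b - t := by linarith [ht.2]
  have hlim : Tendsto (fun n : ℕ => M * (C * (b - t)) ^ n / n.factorial) atTop (nhds 0) := by
    have := FloorSemiring.tendsto_pow_div_factorial_atTop (C * (b - t))
    have h := this.const_mul M
    simpa [mul_div_assoc] using h
  have hle : f t ≤ 0 := le_of_tendsto_of_tendsto' tendsto_const_nhds hlim (fun n => key n t ht) |>.trans (le_of_eq rfl)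
  exact le_antisymm hle (hpos t ht)

/-- Interval integrability from measurability plus a bound on the interval. -/
lemma intervalIntegrable_of_bound {f : ℝ → ℝ} (hf : AEStronglyMeasurable f volume)
    {a b : ℝ} (C : ℝ) (h : ∀ t ∈ Set.uIcc a b, |f t| ≤ C) :
    IntervalIntegrable f volume a b := by
  rw [intervalIntegrable_iff]
  apply MeasureTheory.Integrable.mono' (g := fun _ => C)
    ((integrableOn_const_iff (C := C)).mpr (Or.inr measure_Ioc_lt_top)) hf.restrict
  filter_upwards [ae_restrict_mem measurableSet_Ioc] with t ht
  exact h t ⟨ht.1.le, ht.2⟩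

/-- Positivity for scalar linear integral equations with locally bounded
measurable coefficient. -/
lemma pos_of_integral_eq {f c : ℝ → ℝ} (hf : Continuous f)
    (hc : AEStronglyMeasurable c volume)
    (hcb : ∀ T : ℝ, 0 ≤ T → ∃ C, ∀ τ ∈ Icc (0:ℝ) T, |c τ| ≤ C)
    (h0 : 0 < f 0)
    (heq : ∀ t : ℝ, 0 ≤ t → f t = f 0 + ∫ τ in (0:ℝ)..t, c τ * f τ) :
    ∀ t : ℝ, 0 ≤ t → 0 < f t := by
  by_contra hcon
  push_neg at hcon
  obtain ⟨T, hT0, hTle⟩ := hcon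
  -- the set of zeros in [0, T]
  have hTne : T ≠ 0 := fun h => by rw [h] at hTle; linarith
  have hTpos : 0 < T := lt_of_le_of_ne hT0 (Ne.symm hTne)
  set Z : Set ℝ := {t ∈ Icc 0 T | f t ≤ 0} with hZ
  have hZne : Z.Nonempty := ⟨T, ⟨hT0, le_rfl⟩, hTle⟩
  have hZclosed : IsClosed Z := by
    have : Z = Icc 0 T ∩ f ⁻¹' Iic 0 := rfl
    rw [this]; exact isClosed_Icc.inter (isClosed_Iic.preimage hf)
  have hZbdd : BddBelow Z := ⟨0, fun t ht => ht.1.1⟩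
  set t₁ := sInf Z with ht₁
  have ht₁mem : t₁ ∈ Z := hZclosed.csInf_mem hZne hZbdd
  have ht₁0 : 0 < t₁ := by
    rcases lt_or_eq_of_le ht₁mem.1.1 with h | h
    · exact h
    · exfalso; rw [← h] at ht₁mem; linarith [ht₁mem.2]
  have hposlt : ∀ t, 0 ≤ t → t < t₁ → 0 < f t := by
    intro t ht htlt
    by_contra hle
    push_neg at hle
    have : t ∈ Z := ⟨⟨ht, le_trans htlt.le ht₁mem.1.2⟩, hle⟩
    exact absurd (csInf_le hZbdd this) (not_le.mpr htlt)
  -- f t₁ = 0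
  have hf₁ : f t₁ = 0 := by
    refine le_antisymm ht₁mem.2 ?_
    have htd : Tendsto f (nhdsWithin t₁ (Iio t₁)) (nhds (f t₁)) :=
      (hf.continuousAt (x := t₁)).continuousWithinAt.tendsto
    refine ge_of_tendsto htd ?_
    filter_upwards [Ioo_mem_nhdsLT_of_mem ⟨ht₁0, le_rfl⟩] with x hx
    exact (hposlt x hx.1.le hx.2).le
  have hnn : ∀ t ∈ Icc (0:ℝ) t₁, 0 ≤ f t := by
    intro t ht
    rcases lt_or_eq_of_le ht.2 with h | h
    · exact (hposlt t ht.1 h).le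
    · rw [h, hf₁]
  obtain ⟨C, hC⟩ := hcb t₁ ht₁0.le
  have hC0 : 0 ≤ C := le_trans (abs_nonneg _) (hC 0 ⟨le_rfl, ht₁0.le⟩)
  -- interval integrability of c * f on subintervals of [0, t₁]
  obtain ⟨Mf, hMf⟩ := isCompact_Icc.exists_bound_of_continuousOn
    (hf.continuousOn : ContinuousOn f (Icc 0 t₁))
  have hint : ∀ t ∈ Icc (0:ℝ) t₁, IntervalIntegrable (fun τ => c τ * f τ) volume t t₁ := by
    intro t ht
    apply intervalIntegrable_of_bound (hc.mul hf.aestronglyMeasurable) (C * Mf)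
    intro τ hτ
    show |c τ * f τ| ≤ C * Mf
    have hτ' : τ ∈ Icc (0:ℝ) t₁ := by
      rw [uIcc_of_le ht.2] at hτ
      exact ⟨le_trans ht.1 hτ.1, hτ.2⟩
    rw [abs_mul]
    exact mul_le_mul (hC τ hτ') (by simpa [Real.norm_eq_abs] using hMf τ hτ') (abs_nonneg _)
      hC0
  -- the integral inequality
  have hineq : ∀ t ∈ Icc (0:ℝ) t₁, f t ≤ C * ∫ τ in t..t₁, f τ := by
    intro t ht
    have h0t₁ := hint 0 ⟨le_rfl, ht₁0.le⟩
    have h0t : IntervalIntegrable (fun τ => c τ * f τ) volume 0 t :=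
      h0t₁.mono_set (by
        rw [uIcc_of_le ht.1, uIcc_of_le ht₁0.le]
        exact Icc_subset_Icc le_rfl ht.2)
    have e1 : f t₁ - f t = (∫ τ in (0:ℝ)..t₁, c τ * f τ) - ∫ τ in (0:ℝ)..t, c τ * f τ := by
      rw [heq t₁ ht₁0.le, heq t ht.1]; ring
    rw [intervalIntegral.integral_interval_sub_left h0t₁ h0t] at e1
    have e2 : f t = ∫ τ in t..t₁, -(c τ * f τ) := by
      rw [intervalIntegral.integral_neg, ← e1, hf₁]; ring
    rw [e2, ← intervalIntegral.integral_const_mul]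
    apply intervalIntegral.integral_mono_on ht.2 ((hint t ht).neg)
    · exact (continuous_const.mul hf).intervalIntegrable t t₁
    · intro τ hτ
      have hτ' : τ ∈ Icc (0:ℝ) t₁ := ⟨le_trans ht.1 hτ.1, hτ.2⟩
      have := neg_abs_le (c τ)
      have h1 : -(c τ * f τ) ≤ |c τ| * f τ := by
        have := hnn τ hτ'
        nlinarith [neg_abs_le (c τ), le_abs_self (c τ)]
      exact h1.trans (mul_le_mul_of_nonneg_right (hC τ hτ') (hnn τ hτ'))
  have := gronwall_zero ht₁0.le hC0 hf.continuousOn hnn hineq 0 ⟨le_rfl, ht₁0.le⟩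
  linarith

/-- If the control is integrable on `(0,∞)`, then herd immunity is reached:
`s_∞ < γ/β`. -/
theorem statement4 (β γ umax : ℝ) (hβ : 0 < β) (hγ : 0 < γ)
    (humax : 0 < umax) (humaxβ : umax < β)
    (u : ℝ → ℝ) (hu : IsControl umax u)
    (hL1 : MeasureTheory.IntegrableOn u (Set.Ioi 0))
    (i₀ s₀ : ℝ) (hi₀ : i₀ ∈ Set.Ioo (0:ℝ) 1) (hs₀ : s₀ ∈ Set.Ioc (0:ℝ) (1 - i₀))
    (s i : ℝ → ℝ) (hsol : SIRSol β γ u s i s₀ i₀)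
    (sInf : ℝ) (hlim : Filter.Tendsto s Filter.atTop (nhds sInf)) :
    sInf < γ / β := by
  obtain ⟨humeas, hurange⟩ := hu
  obtain ⟨hscont, hicont, hseq, hieq⟩ := hsol
  have hu0 : ∀ τ, 0 ≤ u τ := fun τ => (hurange τ).1
  have huM : ∀ τ, u τ ≤ umax := fun τ => (hurange τ).2
  have hβu : ∀ τ, 0 < β - u τ := fun τ => by linarith [huM τ]
  have hβu' : ∀ τ, |β - u τ| ≤ β := fun τ => by
    rw [abs_of_pos (hβu τ)]; linarith [hu0 τ]
  -- basic values at 0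
  have hs0 : s 0 = s₀ := by simpa using hseq 0 le_rfl
  have hi0eq : i 0 = i₀ := by simpa using hieq 0 le_rfl
  -- measurability
  have hG : AEStronglyMeasurable (fun τ => (β - u τ) * s τ * i τ) volume :=
    (((measurable_const.sub humeas).mul hscont.measurable).mul
      hicont.measurable).aestronglyMeasurable
  -- interval integrability of the interaction term
  have hGint : ∀ a b : ℝ, IntervalIntegrable (fun τ => (β - u τ) * s τ * i τ) volume a b := by
    intro a b
    obtain ⟨Ms, hMs⟩ := isCompact_uIcc.exists_bound_of_continuousOn
      (hscont.continuousOn : ContinuousOn s (uIcc a b))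
    obtain ⟨Mi, hMi⟩ := isCompact_uIcc.exists_bound_of_continuousOn
      (hicont.continuousOn : ContinuousOn i (uIcc a b))
    apply intervalIntegrable_of_bound hG (β * Ms * Mi)
    intro τ hτ
    have h1 : |s τ| ≤ Ms := by simpa [Real.norm_eq_abs] using hMs τ hτ
    have h2 : |i τ| ≤ Mi := by simpa [Real.norm_eq_abs] using hMi τ hτ
    have h3 : (0:ℝ) ≤ Ms := le_trans (abs_nonneg _) h1
    have h4 : (0:ℝ) ≤ Mi := le_trans (abs_nonneg _) h2
    calc |(β - u τ) * s τ * i τ| = |β - u τ| * |s τ| * |i τ| := by rw [abs_mul, abs_mul]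
      _ ≤ β * Ms * Mi := by
          apply mul_le_mul _ h2 (abs_nonneg _) (by positivity)
          exact mul_le_mul (hβu' τ) h1 (abs_nonneg _) hβ.le
  have hAint : ∀ a b : ℝ,
      IntervalIntegrable (fun τ => (β - u τ) * s τ * i τ - γ * i τ) volume a b :=
    fun a b => (hGint a b).sub ((continuous_const.mul hicont).intervalIntegrable a b)
  -- positivity of i
  have hipos : ∀ t : ℝ, 0 ≤ t → 0 < i t := by
    apply pos_of_integral_eq hicont
      (((measurable_const.sub humeas).mul hscont.measurable).sub
        measurable_const).aestronglyMeasurable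
    · intro T hT
      obtain ⟨Ms, hMs⟩ := isCompact_Icc.exists_bound_of_continuousOn
        (hscont.continuousOn : ContinuousOn s (Icc 0 T))
      refine ⟨β * Ms + γ, fun τ hτ => ?_⟩
      have h1 : |s τ| ≤ Ms := by simpa [Real.norm_eq_abs] using hMs τ hτ
      calc |(β - u τ) * s τ - γ| ≤ |(β - u τ) * s τ| + |γ| := abs_sub _ _
        _ ≤ β * Ms + γ := by
            rw [abs_mul, abs_of_pos hγ]
            exact add_le_add (mul_le_mul (hβu' τ) h1 (abs_nonneg _) hβ.le) le_rfl
    · rw [hi0eq]; exact hi₀.1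
    · intro t ht
      rw [hieq t ht, hi0eq]
      congr 1
      apply intervalIntegral.integral_congr
      intro τ _
      simp only [Pi.mul_apply, Pi.sub_apply, Pi.neg_apply]
      ring
  -- positivity of s
  have hspos : ∀ t : ℝ, 0 ≤ t → 0 < s t := by
    apply pos_of_integral_eq hscont
      (((measurable_const.sub humeas).mul hicont.measurable).neg).aestronglyMeasurable
    · intro T hT
      obtain ⟨Mi, hMi⟩ := isCompact_Icc.exists_bound_of_continuousOn
        (hicont.continuousOn : ContinuousOn i (Icc 0 T))
      refine ⟨β * Mi, fun τ hτ => ?_⟩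
      have h1 : |i τ| ≤ Mi := by simpa [Real.norm_eq_abs] using hMi τ hτ
      calc |-(((β - u τ)) * i τ)| = |β - u τ| * |i τ| := by rw [abs_neg, abs_mul]
        _ ≤ β * Mi := mul_le_mul (hβu' τ) h1 (abs_nonneg _) hβ.le
    · rw [hs0]; exact hs₀.1
    · intro t ht
      rw [hseq t ht, hs0]
      congr 1
      apply intervalIntegral.integral_congr
      intro τ _
      simp only [Pi.mul_apply, Pi.sub_apply, Pi.neg_apply]
      ring
  have hNint : ∀ a b : ℝ,
      IntervalIntegrable (fun τ => -((β - u τ) * s τ * i τ)) volume a b :=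
    fun a b => (hGint a b).neg
  -- difference identities
  have hssub : ∀ t₁ t₂ : ℝ, 0 ≤ t₁ → t₁ ≤ t₂ →
      s t₂ - s t₁ = ∫ τ in t₁..t₂, -((β - u τ) * s τ * i τ) := by
    intro t₁ t₂ h1 h12
    have e : s t₂ - s t₁ = (∫ τ in (0:ℝ)..t₂, -((β - u τ) * s τ * i τ))
        - ∫ τ in (0:ℝ)..t₁, -((β - u τ) * s τ * i τ) := by
      rw [hseq t₂ (h1.trans h12), hseq t₁ h1]; ring
    rw [e, intervalIntegral.integral_interval_sub_left (hNint 0 t₂) (hNint 0 t₁)]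
  have hisub : ∀ t₁ t₂ : ℝ, 0 ≤ t₁ → t₁ ≤ t₂ →
      i t₂ - i t₁ = ∫ τ in t₁..t₂, ((β - u τ) * s τ * i τ - γ * i τ) := by
    intro t₁ t₂ h1 h12
    have e : i t₂ - i t₁ = (∫ τ in (0:ℝ)..t₂, ((β - u τ) * s τ * i τ - γ * i τ))
        - ∫ τ in (0:ℝ)..t₁, ((β - u τ) * s τ * i τ - γ * i τ) := by
      rw [hieq t₂ (h1.trans h12), hieq t₁ h1]; ring
    rw [e, intervalIntegral.integral_interval_sub_left (hAint 0 t₂) (hAint 0 t₁)]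
  -- s is antitone on [0,∞)
  have hanti : ∀ t₁ t₂ : ℝ, 0 ≤ t₁ → t₁ ≤ t₂ → s t₂ ≤ s t₁ := by
    intro t₁ t₂ h1 h12
    have e := hssub t₁ t₂ h1 h12
    have hnn : (0:ℝ) ≤ ∫ τ in t₁..t₂, (β - u τ) * s τ * i τ := by
      apply intervalIntegral.integral_nonneg h12
      intro τ hτ
      have hτ0 : 0 ≤ τ := le_trans h1 hτ.1
      have := hspos τ hτ0
      have := hipos τ hτ0
      have := hβu τ
      positivity
    rw [intervalIntegral.integral_neg] at e
    linarith
  have hsInf_le : ∀ t : ℝ, 0 ≤ t → sInf ≤ s t := by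
    intro t ht
    apply le_of_tendsto hlim
    filter_upwards [eventually_ge_atTop t] with x hx
    exact hanti t x ht hx
  have hsle1 : ∀ t : ℝ, 0 ≤ t → s t ≤ 1 := by
    intro t ht
    have := hanti 0 t le_rfl ht
    rw [hs0] at this
    linarith [hs₀.2, hi₀.1]
  -- conservation-type identity
  have hsum : ∀ t : ℝ, 0 ≤ t → s t + i t = s₀ + i₀ - γ * ∫ τ in (0:ℝ)..t, i τ := by
    intro t ht
    have hadd : (∫ τ in (0:ℝ)..t, -((β - u τ) * s τ * i τ))
        + (∫ τ in (0:ℝ)..t, ((β - u τ) * s τ * i τ - γ * i τ))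
        = -(γ * ∫ τ in (0:ℝ)..t, i τ) := by
      rw [← intervalIntegral.integral_add (hNint 0 t) (hAint 0 t)]
      have : (∫ τ in (0:ℝ)..t, (-((β - u τ) * s τ * i τ)
          + ((β - u τ) * s τ * i τ - γ * i τ))) = ∫ τ in (0:ℝ)..t, -(γ * i τ) := by
        apply intervalIntegral.integral_congr
        intro τ _
        ring
      rw [this, intervalIntegral.integral_neg, intervalIntegral.integral_const_mul]
    rw [hseq t ht, hieq t ht]
    linarith [hadd]
  -- integral of i is bounded
  have hFle : ∀ t : ℝ, 0 ≤ t → (∫ τ in (0:ℝ)..t, i τ) ≤ (s₀ + i₀) / γ := by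
    intro t ht
    have h1 := hsum t ht
    have h2 := hspos t ht
    have h3 := hipos t ht
    rw [le_div_iff₀ hγ]
    nlinarith
  -- F tends to a finite limit
  set F : ℝ → ℝ := fun t => ∫ τ in (0:ℝ)..max t 0, i τ with hFdef
  have hFmono : Monotone F := by
    intro a b hab
    have h0a : (0:ℝ) ≤ max a 0 := le_max_right _ _
    have hab' : max a 0 ≤ max b 0 := max_le_max hab le_rfl
    have e : F b - F a = ∫ τ in (max a 0)..(max b 0), i τ := by
      rw [hFdef]
      simp only
      rw [← intervalIntegral.integral_interval_sub_left
        (hicont.intervalIntegrable 0 (max b 0)) (hicont.intervalIntegrable 0 (max a 0))]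
    have : (0:ℝ) ≤ ∫ τ in (max a 0)..(max b 0), i τ := by
      apply intervalIntegral.integral_nonneg hab'
      intro τ hτ
      exact (hipos τ (le_trans h0a hτ.1)).le
    linarith
  have hFbdd : BddAbove (Set.range F) := by
    refine ⟨(s₀ + i₀) / γ, ?_⟩
    rintro x ⟨t, rfl⟩
    exact hFle (max t 0) (le_max_right _ _)
  have hFtend : Tendsto F atTop (nhds (⨆ t, F t)) := tendsto_atTop_ciSup hFmono hFbdd
  set L := ⨆ t, F t with hL
  -- i tends to a limit
  set Li := s₀ + i₀ - sInf - γ * L with hLidef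
  have hitend : Tendsto i atTop (nhds Li) := by
    have h1 : Tendsto (fun t => s₀ + i₀ - s t - γ * F t) atTop (nhds Li) := by
      rw [hLidef]
      exact (tendsto_const_nhds.sub hlim).sub (hFtend.const_mul γ)
    apply h1.congr'
    filter_upwards [eventually_ge_atTop (0:ℝ)] with t ht
    have := hsum t ht
    rw [hFdef]
    simp only [max_eq_left ht]
    linarith
  -- the limit of i is 0
  have hLi0 : Li = 0 := by
    have hge : 0 ≤ Li := by
      apply ge_of_tendsto hitend
      filter_upwards [eventually_ge_atTop (0:ℝ)] with t ht
      exact (hipos t ht).le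
    rcases lt_or_eq_of_le hge with hpos | h
    · exfalso
      have h2 : ∀ᶠ t in atTop, Li / 2 < i t := by
        apply hitend.eventually
        exact eventually_gt_nhds (by linarith)
      obtain ⟨t₀', ht₀'⟩ := (h2.and (eventually_ge_atTop (0:ℝ))).exists_forall_of_atTop
      set t₀ := max t₀' 0 with ht₀def
      have ht₀0 : (0:ℝ) ≤ t₀ := le_max_right _ _
      have hgrow : ∀ t : ℝ, t₀ ≤ t →
          Li / 2 * (t - t₀) + F t₀ ≤ F t := by
        intro t ht
        have ht0 : (0:ℝ) ≤ t := le_trans ht₀0 ht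
        have e : F t - F t₀ = ∫ τ in t₀..t, i τ := by
          rw [hFdef]
          simp only [max_eq_left ht0, max_eq_left ht₀0]
          rw [← intervalIntegral.integral_interval_sub_left
            (hicont.intervalIntegrable 0 t) (hicont.intervalIntegrable 0 t₀)]
        have hmono : (∫ τ in t₀..t, (Li / 2 : ℝ)) ≤ ∫ τ in t₀..t, i τ := by
          apply intervalIntegral.integral_mono_on ht
            (intervalIntegrable_const) (hicont.intervalIntegrable t₀ t)
          intro τ hτ
          exact (ht₀' τ (le_trans (le_max_left _ _) hτ.1)).1.le
        rw [intervalIntegral.integral_const, smul_eq_mul] at hmono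
        nlinarith
      have hF0 : F t₀ ≤ (s₀ + i₀) / γ := hFle (max t₀ 0) (le_max_right _ _)
      have hX : (0:ℝ) < (s₀ + i₀) / γ - F t₀ + 1 := by linarith
      have h2Li : (0:ℝ) < 2 / Li := by positivity
      have hbad := hgrow (t₀ + 2 / Li * ((s₀ + i₀) / γ - F t₀ + 1)) (by nlinarith)
      have h4 : F (t₀ + 2 / Li * ((s₀ + i₀) / γ - F t₀ + 1)) ≤ (s₀ + i₀) / γ :=
        hFle (max (t₀ + 2 / Li * ((s₀ + i₀) / γ - F t₀ + 1)) 0) (le_max_right _ _)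
      have h5 : Li / 2 * (2 / Li * ((s₀ + i₀) / γ - F t₀ + 1)) =
          (s₀ + i₀) / γ - F t₀ + 1 := by
        field_simp
      have h6 : Li / 2 * (t₀ + 2 / Li * ((s₀ + i₀) / γ - F t₀ + 1) - t₀) =
          Li / 2 * (2 / Li * ((s₀ + i₀) / γ - F t₀ + 1)) := by ring
      linarith [hbad, h4, h5, h6]
    · exact h.symm
  rw [hLi0] at hitend
  -- now the contradiction argument
  by_contra hcon
  push_neg at hcon
  have hsγ : ∀ τ : ℝ, 0 ≤ τ → γ ≤ β * s τ := by
    intro τ hτ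
    have h1 := hsInf_le τ hτ
    have h2 : γ / β ≤ sInf := hcon
    rw [div_le_iff₀ hβ] at h2
    nlinarith
  have ha : ∀ τ : ℝ, 0 ≤ τ → -u τ ≤ (β - u τ) * s τ - γ := by
    intro τ hτ
    have h1 := hsγ τ hτ
    have h2 := hsle1 τ hτ
    have h3 := (hspos τ hτ).le
    have h4 := hu0 τ
    nlinarith
  -- integrability of u on positive intervals
  have hUint : ∀ a b : ℝ, 0 ≤ a → a ≤ b → IntervalIntegrable u volume a b := by
    intro a b ha0 hab
    rw [intervalIntegrable_iff_integrableOn_Ioc_of_le hab]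
    exact hL1.mono_set (fun x hx => lt_of_le_of_lt ha0 hx.1)
  -- the running integral of u, its supremum
  set U : ℝ → ℝ := fun t => ∫ τ in (0:ℝ)..max t 0, u τ with hUdef
  have hUeq : ∀ t : ℝ, 0 ≤ t → U t = ∫ τ in (0:ℝ)..t, u τ := by
    intro t ht
    rw [hUdef]
    simp only [max_eq_left ht]
  have hUmono : Monotone U := by
    intro a b hab
    have h0a : (0:ℝ) ≤ max a 0 := le_max_right _ _
    have hab' : max a 0 ≤ max b 0 := max_le_max hab le_rfl
    have e : U b - U a = ∫ τ in (max a 0)..(max b 0), u τ := by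
      rw [hUdef]
      simp only
      rw [← intervalIntegral.integral_interval_sub_left
        (hUint 0 (max b 0) le_rfl (le_max_right _ _)) (hUint 0 (max a 0) le_rfl h0a)]
    have : (0:ℝ) ≤ ∫ τ in (max a 0)..(max b 0), u τ :=
      intervalIntegral.integral_nonneg hab' (fun τ _ => hu0 τ)
    linarith
  have hUbdd : BddAbove (Set.range U) := by
    refine ⟨∫ τ in Ioi (0:ℝ), u τ, ?_⟩
    rintro x ⟨t, rfl⟩
    have h0m : (0:ℝ) ≤ max t 0 := le_max_right _ _
    have e : U t = ∫ τ in Ioc (0:ℝ) (max t 0), u τ := by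
      rw [hUdef]
      simp only
      rw [intervalIntegral.integral_of_le h0m]
    rw [e]
    apply MeasureTheory.setIntegral_mono_set hL1
    · filter_upwards [ae_restrict_mem measurableSet_Ioi] with x _
      exact hu0 x
    · exact HasSubset.Subset.eventuallyLE (fun x hx => hx.1)
  set MU := ⨆ t, U t with hMU
  obtain ⟨t', ht'⟩ : ∃ t', MU - 1/2 < U t' :=
    exists_lt_of_lt_ciSup (by linarith)
  set t₂ := max t' 0 with ht₂def
  have ht₂0 : (0:ℝ) ≤ t₂ := le_max_right _ _
  have hUt₂ : U t' = U t₂ := by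
    rw [hUdef]
    simp only
    rw [show max t₂ 0 = max t' 0 from max_eq_left ht₂0]
  have htail : ∀ t : ℝ, t₂ ≤ t → (∫ τ in t₂..t, u τ) ≤ 1/2 := by
    intro t ht
    have ht0 : (0:ℝ) ≤ t := le_trans ht₂0 ht
    have e : (∫ τ in t₂..t, u τ) = U t - U t₂ := by
      rw [hUeq t ht0, hUeq t₂ ht₂0]
      rw [← intervalIntegral.integral_interval_sub_left
        (hUint 0 t le_rfl ht0) (hUint 0 t₂ le_rfl ht₂0)]
    have hle : U t ≤ MU := le_ciSup hUbdd t
    rw [e, ← hUt₂]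
    linarith
  -- eventually i is below i t₂
  have h2 : ∀ᶠ t in atTop, i t < i t₂ :=
    hitend (Iio_mem_nhds (hipos t₂ ht₂0))
  obtain ⟨t₄', ht₄'⟩ := h2.exists_forall_of_atTop
  set t₄ := max t₄' t₂ with ht₄def
  have ht₂₄ : t₂ ≤ t₄ := le_max_right _ _
  obtain ⟨t₃, ht₃mem, ht₃max⟩ := isCompact_Icc.exists_isMaxOn
    (⟨t₂, le_rfl, ht₂₄⟩ : (Icc t₂ t₄).Nonempty) hicont.continuousOn
  have ht₂₃ : t₂ ≤ t₃ := ht₃mem.1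
  have ht₃0 : (0:ℝ) ≤ t₃ := le_trans ht₂0 ht₂₃
  have hmax : ∀ t : ℝ, t₂ ≤ t → i t ≤ i t₃ := by
    intro t ht
    rcases le_or_gt t t₄ with h | h
    · exact ht₃max ⟨ht, h⟩
    · exact le_trans (ht₄' t (le_trans (le_max_left _ _) h.le)).le
        (ht₃max ⟨le_rfl, ht₂₄⟩)
  have hit₃pos : 0 < i t₃ := hipos t₃ ht₃0
  -- lower bound for t ≥ t₃
  have hlower : ∀ t : ℝ, t₃ ≤ t → i t₃ / 2 ≤ i t := by
    intro t ht
    have ht0 : (0:ℝ) ≤ t := le_trans ht₃0 ht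
    have e := hisub t₃ t ht₃0 ht
    have hm : (∫ τ in t₃..t, (-(u τ) * i t₃))
        ≤ ∫ τ in t₃..t, ((β - u τ) * s τ * i τ - γ * i τ) := by
      apply intervalIntegral.integral_mono_on ht
        (((hUint t₃ t ht₃0 ht).neg).mul_const (i t₃)) (hAint t₃ t)
      intro τ hτ
      show -(u τ) * i t₃ ≤ (β - u τ) * s τ * i τ - γ * i τ
      have hτ0 : (0:ℝ) ≤ τ := le_trans ht₃0 hτ.1
      have h1 := ha τ hτ0
      have h2' := (hipos τ hτ0).le
      have h3 := hmax τ (le_trans ht₂₃ hτ.1)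
      have h4 := hu0 τ
      have p1 : -(u τ) * i t₃ ≤ -(u τ) * i τ := by nlinarith [mul_le_mul_of_nonneg_left h3 h4]
      have p2 := mul_le_mul_of_nonneg_right h1 h2'
      nlinarith [p1, p2]
    have heval : (∫ τ in t₃..t, (-(u τ) * i t₃)) = -(∫ τ in t₃..t, u τ) * i t₃ := by
      rw [intervalIntegral.integral_mul_const, intervalIntegral.integral_neg]
    have htail' : (∫ τ in t₃..t, u τ) ≤ 1/2 := by
      have e2 : (∫ τ in t₂..t, u τ) - (∫ τ in t₂..t₃, u τ) = ∫ τ in t₃..t, u τ :=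
        intervalIntegral.integral_interval_sub_left
          (hUint t₂ t ht₂0 (le_trans ht₂₃ ht)) (hUint t₂ t₃ ht₂0 ht₂₃)
      have e3 : (0:ℝ) ≤ ∫ τ in t₂..t₃, u τ :=
        intervalIntegral.integral_nonneg ht₂₃ (fun τ _ => hu0 τ)
      have := htail t (le_trans ht₂₃ ht)
      linarith
    rw [heval] at hm
    have hkey : (∫ τ in t₃..t, u τ) * i t₃ ≤ 1/2 * i t₃ :=
      mul_le_mul_of_nonneg_right htail' hit₃pos.le
    linarith [hm, e, hkey]
  -- contradiction with i → 0
  have hev : ∀ᶠ t in atTop, i t < i t₃ / 2 :=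
    hitend (Iio_mem_nhds (by positivity))
  obtain ⟨T, hT⟩ := (hev.and (eventually_ge_atTop t₃)).exists
  linarith [hlower T hT.2, hT.1]
end
end

section
/- Let u ∈ [0, u_max] be a constant, and let (s,i) be the solution of the controlled SIR system with constant control u and initial data i₀ ∈ (0,1), s₀ ∈ (0, 1−i₀]. Then for every t ≥ 0, i(t) = s₀ + i₀ − s(t) + (γ/(β−u))·(log s(t) − log s₀). -/
open MeasureTheory Filter Set intervalIntegral
open scoped ENNReal

noncomputable section

/-- For a constant control `u ≡ c`, the trajectory satisfies
`i = s₀ + i₀ - s + (γ/(β-c))·(log s - log s₀)`. -/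
theorem statement6 (β γ umax : ℝ) (hβ : 0 < β) (hγ : 0 < γ)
    (humax : 0 < umax) (humaxβ : umax < β)
    (c : ℝ) (hc : c ∈ Set.Icc (0:ℝ) umax)
    (i₀ s₀ : ℝ) (hi₀ : i₀ ∈ Set.Ioo (0:ℝ) 1) (hs₀ : s₀ ∈ Set.Ioc (0:ℝ) (1 - i₀))
    (s i : ℝ → ℝ) (hsol : SIRSol β γ (fun _ => c) s i s₀ i₀) :
    ∀ t : ℝ, 0 ≤ t →
      i t = s₀ + i₀ - s t + (γ / (β - c)) * (Real.log (s t) - Real.log s₀) := by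
  intro t ht
  obtain ⟨hS, hI, heqs, heqi⟩ := hsol
  set k := β - c with hk
  have hkpos : 0 < k := by
    have := hc.2; simp only [hk]; linarith
  -- continuous integrands
  have hf : Continuous (fun τ => (β - (fun _ : ℝ => c) τ) * s τ * i τ) := by
    continuity
  have hg : Continuous (fun τ => (β - (fun _ : ℝ => c) τ) * s τ * i τ - γ * i τ) := by
    continuity
  -- global primitives
  set S : ℝ → ℝ := fun x => s₀ + ∫ τ in (0:ℝ)..x, -((β - (fun _ : ℝ => c) τ) * s τ * i τ) with hSdef
  set I : ℝ → ℝ := fun x => i₀ + ∫ τ in (0:ℝ)..x, ((β - (fun _ : ℝ => c) τ) * s τ * i τ - γ * i τ) with hIdef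
  have hSeq : ∀ x : ℝ, 0 ≤ x → S x = s x := fun x hx => (heqs x hx).symm
  have hIeq : ∀ x : ℝ, 0 ≤ x → I x = i x := fun x hx => (heqi x hx).symm
  have hSd : ∀ x : ℝ, HasDerivAt S (-((β - c) * s x * i x)) x := by
    intro x
    have := (hf.neg.integral_hasStrictDerivAt 0 x).hasDerivAt
    exact this.const_add s₀
  have hId : ∀ x : ℝ, HasDerivAt I ((β - c) * s x * i x - γ * i x) x := by
    intro x
    have := (hg.integral_hasStrictDerivAt 0 x).hasDerivAt
    exact this.const_add i₀
  have hScont : Continuous S := by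
    apply continuous_iff_continuousAt.2
    exact fun x => (hSd x).continuousAt
  have hIcont : Continuous I := by
    apply continuous_iff_continuousAt.2
    exact fun x => (hId x).continuousAt
  -- positivity of S on [0, t]
  set J : ℝ → ℝ := fun x => ∫ τ in (0:ℝ)..x, k * I τ with hJdef
  have hJd : ∀ x : ℝ, HasDerivAt J (k * I x) x := fun x =>
    (((continuous_const.mul hIcont).integral_hasStrictDerivAt 0 x).hasDerivAt)
  set G : ℝ → ℝ := fun x => S x * Real.exp (J x) with hGdef
  have hGd : ∀ x : ℝ, 0 ≤ x → HasDerivAt G 0 x := by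
    intro x hx
    have h1 : HasDerivAt (fun y => Real.exp (J y)) (Real.exp (J x) * (k * I x)) x :=
      (Real.hasDerivAt_exp (J x)).comp x (hJd x)
    have h2 := (hSd x).mul h1
    exact h2.congr_deriv (by rw [hSeq x hx, hIeq x hx, hk]; ring)
  have hJcont : Continuous J := continuous_iff_continuousAt.2 fun x => (hJd x).continuousAt
  have hGconst : ∀ x ∈ Set.Icc (0:ℝ) t, G x = G 0 :=
    constant_of_has_deriv_right_zero (hScont.mul (Real.continuous_exp.comp hJcont)).continuousOn
      (fun x hx => ((hGd x hx.1).hasDerivWithinAt))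
  have hSpos : ∀ x ∈ Set.Icc (0:ℝ) t, 0 < S x := by
    intro x hx
    have hG0 : G 0 = s₀ := by
      simp [hGdef, hSdef, hJdef, intervalIntegral.integral_same]
    have := hGconst x hx
    rw [hG0] at this
    simp only [hGdef] at this
    have hexp : 0 < Real.exp (J x) := Real.exp_pos _
    have hs₀pos := hs₀.1
    nlinarith [Real.exp_pos (J x)]
  -- the conserved quantity
  set W : ℝ → ℝ := fun x => I x + S x - (γ / k) * Real.log (S x) with hWdef
  have hWd : ∀ x ∈ Set.Ico (0:ℝ) t, HasDerivAt W 0 x := by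
    intro x hx
    have hx' : x ∈ Set.Icc (0:ℝ) t := ⟨hx.1, le_of_lt hx.2⟩
    have hSx : 0 < S x := hSpos x hx'
    have hlog : HasDerivAt (fun y => Real.log (S y)) (-((β - c) * s x * i x) / S x) x :=
      (Real.hasDerivAt_log (ne_of_gt hSx)).comp x (hSd x) |>.congr_deriv (by ring)
    have h2 := ((hId x).add (hSd x)).sub (hlog.const_mul (γ / k))
    have hsx : S x = s x := hSeq x hx.1
    have hix : I x = i x := hIeq x hx.1
    have heq : (β - c) * s x * i x - γ * i x + -((β - c) * s x * i x) -
        γ / k * (-((β - c) * s x * i x) / S x) = 0 := by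
      rw [hsx]
      have hsxpos : 0 < s x := hsx ▸ hSx
      field_simp [hk]
      ring
    exact h2.congr_deriv heq
  have hWcont : ContinuousOn W (Set.Icc 0 t) := by
    apply ContinuousOn.sub (hIcont.continuousOn.add hScont.continuousOn)
    apply ContinuousOn.mul continuousOn_const
    exact Real.continuousOn_log.comp hScont.continuousOn
      (fun x hx => ne_of_gt (hSpos x hx))
  have hWconst := constant_of_has_deriv_right_zero hWcont
    (fun x hx => (hWd x hx).hasDerivWithinAt) t ⟨ht, le_refl t⟩
  have hW0 : W 0 = i₀ + s₀ - (γ / k) * Real.log s₀ := by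
    simp [hWdef, hSdef, hIdef, intervalIntegral.integral_same]
  rw [hW0] at hWconst
  have hst : S t = s t := hSeq t ht
  have hit : I t = i t := hIeq t ht
  have : I t + S t - γ / k * Real.log (S t) = i₀ + s₀ - γ / k * Real.log s₀ := hWconst
  rw [hst, hit] at this
  rw [hk] at this ⊢
  linarith [this]
end
end

section
/- The viable set B := {(s₀,i₀) ∈ T : there exists a control u with i^{s₀,i₀,u}(t) ≤ i_M for all t ∈ (0,∞)} equals the set {(s,i) ∈ T : 0 < i ≤ Φ_max(s)}, where Φ_max(s) = i_M for 0 < s < γ/(β−u_max) and Φ_max(s) = γ/(β−u_max) + i_M − s + (γ/(β−u_max))·(log s − log(γ/(β−u_max))) for s ≥ γ/(β−u_max). -/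
open MeasureTheory Filter Set intervalIntegral
open scoped ENNReal

noncomputable section

/-- Interval integrability of a measurable function bounded on the interval. -/
lemma aux_intInt {w : ℝ → ℝ} (hw : Measurable w) {a b C : ℝ}
    (h : ∀ τ ∈ Set.uIcc a b, |w τ| ≤ C) :
    IntervalIntegrable w MeasureTheory.volume a b := by
  rw [intervalIntegrable_iff]
  refine MeasureTheory.Integrable.mono' (g := fun _ => C)
    ((integrableOn_const_iff (C := C)).mpr (Or.inr ?_))
    (hw.aestronglyMeasurable.restrict) ?_
  · rw [Set.uIoc]; exact measure_Ioc_lt_top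
  · refine (MeasureTheory.ae_restrict_iff' measurableSet_uIoc).mpr ?_
    filter_upwards with τ hτ
    exact h τ (Set.uIoc_subset_uIcc hτ)

/-- First crossing of zero from a positive start. -/
lemma exists_first_crossing {f : ℝ → ℝ} (hf : Continuous f) {t₁ : ℝ}
    (h0 : 0 < f 0) (ht₁ : 0 < t₁) (h1 : f t₁ ≤ 0) :
    ∃ b, 0 < b ∧ b ≤ t₁ ∧ f b = 0 ∧ ∀ τ, 0 ≤ τ → τ < b → 0 < f τ := by
  set S : Set ℝ := {t ∈ Set.Icc 0 t₁ | f t ≤ 0} with hS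
  have hSclosed : IsClosed S := by
    have : S = Set.Icc 0 t₁ ∩ {t | f t ≤ 0} := by ext x; simp [hS, Set.mem_setOf_eq, and_comm]
    rw [this]
    exact isClosed_Icc.inter (isClosed_le hf continuous_const)
  have hSne : S.Nonempty := ⟨t₁, ⟨le_of_lt ht₁, le_refl _⟩, h1⟩
  have hSbdd : BddBelow S := ⟨0, fun x hx => hx.1.1⟩
  have hbS : sInf S ∈ S := hSclosed.csInf_mem hSne hSbdd
  set b := sInf S with hb
  have hb0 : 0 ≤ b := hbS.1.1
  have hbt₁ : b ≤ t₁ := hbS.1.2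
  have hpos : ∀ τ, 0 ≤ τ → τ < b → 0 < f τ := by
    intro τ hτ0 hτb
    by_contra hc
    push_neg at hc
    have : τ ∈ S := ⟨⟨hτ0, hτb.le.trans hbt₁⟩, hc⟩
    exact absurd (csInf_le hSbdd this) (not_le.mpr hτb)
  have hbpos : 0 < b := by
    rcases lt_or_eq_of_le hb0 with h | h
    · exact h
    · exfalso; rw [← h] at hbS; exact absurd hbS.2 (not_le.mpr h0)
  have hfb : f b = 0 := by
    have hge : 0 ≤ f b := by
      have hsub : Set.Ico (0:ℝ) b ⊆ {t | 0 ≤ f t} := fun τ hτ => (hpos τ hτ.1 hτ.2).le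
      have hcl : IsClosed {t | 0 ≤ f t} := isClosed_le continuous_const hf
      have : Set.Icc (0:ℝ) b ⊆ {t | 0 ≤ f t} := by
        rw [← closure_Ico (ne_of_lt hbpos)]
        exact hcl.closure_subset_iff.mpr hsub
      exact this ⟨hb0, le_refl _⟩
    linarith [hbS.2]
  exact ⟨b, hbpos, hbt₁, hfb, hpos⟩

/-- Last zero before a positive value. -/
lemma exists_last_zero {φ : ℝ → ℝ} (hφ : Continuous φ) {t₁ : ℝ}
    (h0 : φ 0 ≤ 0) (ht₁ : 0 < t₁) (h1 : 0 < φ t₁) :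
    ∃ b, 0 ≤ b ∧ b < t₁ ∧ φ b = 0 ∧ ∀ τ, b < τ → τ ≤ t₁ → 0 < φ τ := by
  set S : Set ℝ := {t ∈ Set.Icc 0 t₁ | φ t ≤ 0} with hS
  have hSclosed : IsClosed S := by
    have : S = Set.Icc 0 t₁ ∩ {t | φ t ≤ 0} := by ext x; simp [hS, Set.mem_setOf_eq, and_comm]
    rw [this]
    exact isClosed_Icc.inter (isClosed_le hφ continuous_const)
  have hSne : S.Nonempty := ⟨0, ⟨le_refl _, ht₁.le⟩, h0⟩
  have hSbdd : BddAbove S := ⟨t₁, fun x hx => hx.1.2⟩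
  have hbS : sSup S ∈ S := hSclosed.csSup_mem hSne hSbdd
  set b := sSup S with hb
  have hb0 : 0 ≤ b := hbS.1.1
  have hbt₁ : b ≤ t₁ := hbS.1.2
  have hpos : ∀ τ, b < τ → τ ≤ t₁ → 0 < φ τ := by
    intro τ hτb hτt₁
    by_contra hc
    push_neg at hc
    have : τ ∈ S := ⟨⟨hb0.trans hτb.le, hτt₁⟩, hc⟩
    exact absurd (le_csSup hSbdd this) (not_le.mpr hτb)
  have hblt : b < t₁ := by
    rcases lt_or_eq_of_le hbt₁ with h | h
    · exact h
    · exfalso; rw [h] at hbS; exact absurd hbS.2 (not_le.mpr h1)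
  have hfb : φ b = 0 := by
    have hge : 0 ≤ φ b := by
      have hsub : Set.Ioc b t₁ ⊆ {t | 0 ≤ φ t} := fun τ hτ => (hpos τ hτ.1 hτ.2).le
      have hcl : IsClosed {t | 0 ≤ φ t} := isClosed_le continuous_const hφ
      have : Set.Icc b t₁ ⊆ {t | 0 ≤ φ t} := by
        rw [← closure_Ioc (ne_of_lt hblt)]
        exact hcl.closure_subset_iff.mpr hsub
      exact this ⟨le_refl _, hbt₁⟩
    linarith [hbS.2]
  exact ⟨b, hb0, hblt, hfb, hpos⟩

/-- Grönwall-type: continuous nonneg `f` with `f t ≤ K ∫_t^b f` has nonpositive integral. -/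
lemma gronwall_int_nonpos {f : ℝ → ℝ} (hf : Continuous f) {a b K : ℝ} (hab : a ≤ b)
    (hK : 0 ≤ K) (hle : ∀ t ∈ Set.Icc a b, f t ≤ K * ∫ τ in t..b, f τ) :
    (∫ τ in a..b, f τ) ≤ 0 := by
  set h : ℝ → ℝ := fun t => ∫ τ in t..b, f τ with hh
  have hd : ∀ t : ℝ, HasDerivAt h (-(f t)) t := by
    intro t
    have h1 : HasDerivAt (fun u => ∫ τ in b..u, f τ) (f t) t :=
      intervalIntegral.integral_hasDerivAt_right (hf.intervalIntegrable b t)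
        hf.stronglyMeasurable.stronglyMeasurableAtFilter hf.continuousAt
    have h2 : h = fun u => -∫ τ in b..u, f τ := by
      funext u; simp [hh, intervalIntegral.integral_symm b u]
    rw [h2]; exact h1.neg
  set φ : ℝ → ℝ := fun t => Real.exp (K * t) * h t with hφ
  have hφd : ∀ t : ℝ, HasDerivAt φ (K * Real.exp (K * t) * h t + Real.exp (K * t) * (-(f t))) t := by
    intro t
    have he : HasDerivAt (fun t : ℝ => Real.exp (K * t)) (K * Real.exp (K * t)) t := by
      have := (Real.hasDerivAt_exp (K * t)).comp t ((hasDerivAt_id t).const_mul K)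
      exact this.congr_deriv (by simp; ring)
    exact he.mul (hd t)
  have hmono : MonotoneOn φ (Set.Icc a b) := by
    apply monotoneOn_of_deriv_nonneg (convex_Icc a b)
      (fun t _ => (hφd t).continuousAt.continuousWithinAt)
      (fun t _ => ((hφd t).differentiableAt).differentiableWithinAt)
    intro t ht
    rw [interior_Icc] at ht
    rw [(hφd t).deriv]
    have hft : f t ≤ K * h t := hle t ⟨ht.1.le, ht.2.le⟩
    have : K * Real.exp (K * t) * h t + Real.exp (K * t) * (-(f t))
        = Real.exp (K * t) * (K * h t - f t) := by ring
    rw [this]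
    exact mul_nonneg (Real.exp_pos _).le (by linarith)
  have hφb : φ b = 0 := by simp [hφ, hh]
  have : φ a ≤ φ b := hmono ⟨le_refl _, hab⟩ ⟨hab, le_refl _⟩ hab
  rw [hφb] at this
  have hexp : 0 < Real.exp (K * a) := Real.exp_pos _
  have : Real.exp (K * a) * h a ≤ 0 := this
  nlinarith [hexp, this]

/-- Positivity persists for solutions of linear-type integral equations. -/
lemma pos_persist {f w : ℝ → ℝ} (hf : Continuous f) (hw : Measurable w) (h0 : 0 < f 0)
    (heq : ∀ t, 0 ≤ t → f t = f 0 + ∫ τ in (0:ℝ)..t, w τ)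
    (hbd : ∀ b, 0 < b → ∃ K, 0 ≤ K ∧ ∀ τ ∈ Set.Icc (0:ℝ) b, |w τ| ≤ K * |f τ|) :
    ∀ t, 0 ≤ t → 0 < f t := by
  intro t₁ ht₁
  by_contra hc
  push_neg at hc
  have ht₁pos : 0 < t₁ := by
    rcases lt_or_eq_of_le ht₁ with h | h
    · exact h
    · exfalso; rw [← h] at hc; exact absurd h0 (not_lt.mpr hc)
  obtain ⟨b, hb0, hbt₁, hfb, hpos⟩ := exists_first_crossing hf h0 ht₁pos hc
  obtain ⟨K, hK0, hKbd⟩ := hbd b hb0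
  -- |f| is bounded on [0, b]
  obtain ⟨C, hC⟩ := (isCompact_Icc (a := (0:ℝ)) (b := b)).exists_bound_of_continuousOn
    hf.continuousOn
  have hfnn : ∀ τ ∈ Set.Icc (0:ℝ) b, 0 ≤ f τ := by
    intro τ hτ
    rcases lt_or_eq_of_le hτ.2 with h | h
    · exact (hpos τ hτ.1 h).le
    · rw [h, hfb]
  -- w is interval integrable on subintervals of [0, b]
  have hwint : ∀ x y, x ∈ Set.Icc (0:ℝ) b → y ∈ Set.Icc (0:ℝ) b →
      IntervalIntegrable w MeasureTheory.volume x y := by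
    intro x y hx hy
    refine aux_intInt hw (C := K * C) ?_
    intro τ hτ
    have hτ' : τ ∈ Set.Icc (0:ℝ) b := by
      have : Set.uIcc x y ⊆ Set.Icc (0:ℝ) b := Set.uIcc_subset_Icc hx hy
      exact this hτ
    calc |w τ| ≤ K * |f τ| := hKbd τ hτ'
      _ ≤ K * C := by
        have h5 := hC τ hτ'
        rw [Real.norm_eq_abs] at h5
        exact mul_le_mul_of_nonneg_left h5 hK0
  -- f t = -∫ t..b w on [0,b]
  have hft : ∀ t ∈ Set.Icc (0:ℝ) b, f t = -∫ τ in t..b, w τ := by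
    intro t ht
    have h1 : f b = f 0 + ∫ τ in (0:ℝ)..b, w τ := heq b hb0.le
    have h2 : f t = f 0 + ∫ τ in (0:ℝ)..t, w τ := heq t ht.1
    have h3 : (∫ τ in (0:ℝ)..t, w τ) + ∫ τ in t..b, w τ = ∫ τ in (0:ℝ)..b, w τ :=
      intervalIntegral.integral_add_adjacent_intervals
        (hwint 0 t ⟨le_refl _, hb0.le⟩ ht) (hwint t b ht ⟨hb0.le, le_refl _⟩)
    rw [hfb] at h1
    linarith
  -- hence f t ≤ K ∫ t..b f
  have hle : ∀ t ∈ Set.Icc (0:ℝ) b, f t ≤ K * ∫ τ in t..b, f τ := by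
    intro t ht
    rw [hft t ht]
    have h1 : -∫ τ in t..b, w τ ≤ |∫ τ in t..b, w τ| := neg_le_abs _
    have h2 : |∫ τ in t..b, w τ| ≤ ∫ τ in t..b, |w τ| :=
      intervalIntegral.abs_integral_le_integral_abs ht.2
    have h3 : (∫ τ in t..b, |w τ|) ≤ ∫ τ in t..b, K * f τ := by
      apply intervalIntegral.integral_mono_on ht.2
        ((hwint t b ht ⟨hb0.le, le_refl _⟩).abs) ((continuous_const.mul hf).intervalIntegrable t b)
      intro τ hτ
      have hτ' : τ ∈ Set.Icc (0:ℝ) b := ⟨ht.1.trans hτ.1, hτ.2⟩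
      calc |w τ| ≤ K * |f τ| := hKbd τ hτ'
        _ = K * f τ := by rw [abs_of_nonneg (hfnn τ hτ')]
    have h4 : (∫ τ in t..b, K * f τ) = K * ∫ τ in t..b, f τ := by
      simp [intervalIntegral.integral_const_mul]
    linarith
  have hintpos : 0 < ∫ τ in (0:ℝ)..b, f τ :=
    intervalIntegral_pos_of_pos_on (hf.intervalIntegrable 0 b)
      (fun τ hτ => hpos τ hτ.1.le hτ.2) hb0
  have := gronwall_int_nonpos hf hb0.le hK0 hle
  linarith

lemma g_min {ρ x : ℝ} (hρ : 0 < ρ) (hx : 0 < x) :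
    ρ - ρ * Real.log ρ ≤ x - ρ * Real.log x := by
  have h1 : Real.log (x/ρ) ≤ x/ρ - 1 := Real.log_le_sub_one_of_pos (div_pos hx hρ)
  rw [Real.log_div hx.ne' hρ.ne'] at h1
  have h2 : ρ * (Real.log x - Real.log ρ) ≤ ρ * (x/ρ - 1) :=
    mul_le_mul_of_nonneg_left h1 hρ.le
  have h3 : ρ * (x/ρ - 1) = x - ρ := by field_simp
  nlinarith

lemma g_anti {ρ a b : ℝ} (hρ : 0 < ρ) (ha : 0 < a) (hab : a ≤ b) (hbρ : b ≤ ρ) :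
    b - ρ * Real.log b ≤ a - ρ * Real.log a := by
  have hb : 0 < b := lt_of_lt_of_le ha hab
  have h1 : Real.log (a/b) ≤ a/b - 1 := Real.log_le_sub_one_of_pos (div_pos ha hb)
  rw [Real.log_div ha.ne' hb.ne'] at h1
  -- log b - log a ≥ (b-a)/b
  have h2 : (b - a)/b ≤ Real.log b - Real.log a := by
    have : a/b - 1 = -((b - a)/b) := by field_simp; ring
    rw [this] at h1
    linarith
  have h3 : b * ((b - a)/b) ≤ ρ * ((b - a)/b) :=
    mul_le_mul_of_nonneg_right hbρ (div_nonneg (by linarith) hb.le)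
  have h4 : b * ((b - a)/b) = b - a := by field_simp
  have h5 : ρ * ((b - a)/b) ≤ ρ * (Real.log b - Real.log a) :=
    mul_le_mul_of_nonneg_left h2 hρ.le
  nlinarith

set_option maxHeartbeats 4000000 in
lemma forward_dir {β γ umax iM s₀ i₀ : ℝ} (hγ : 0 < γ)
    (humax : 0 < umax) (humaxβ : umax < β) {u s i : ℝ → ℝ}
    (hu : IsControl umax u) (hsol : SIRSol β γ u s i s₀ i₀) (hadm : Admissible iM i)
    (hs₀ : 0 < s₀) (hi₀ : 0 < i₀) : i₀ ≤ PhiMax β γ umax iM s₀ := by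
  obtain ⟨humeas, hubd⟩ := hu
  obtain ⟨hscont, hicont, hseq, hieq⟩ := hsol
  set k : ℝ := β - umax with hk
  have hkpos : 0 < k := by simp [hk]; linarith
  set ρ : ℝ := γ / k with hρ
  have hρpos : 0 < ρ := div_pos hγ hkpos
  have hkρ : k * ρ = γ := by rw [hρ]; field_simp
  -- initial values
  have hs0 : s 0 = s₀ := by simpa using hseq 0 le_rfl
  have hi0 : i 0 = i₀ := by simpa using hieq 0 le_rfl
  -- coefficient bounds
  have hucoef : ∀ τ, k ≤ β - u τ ∧ β - u τ ≤ β := by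
    intro τ
    obtain ⟨h1, h2⟩ := hubd τ
    constructor <;> simp [hk] <;> linarith
  -- integrands
  set ws : ℝ → ℝ := fun τ => -((β - u τ) * s τ * i τ) with hws
  set wi : ℝ → ℝ := fun τ => (β - u τ) * s τ * i τ - γ * i τ with hwi
  have hwsmeas : Measurable ws :=
    (((measurable_const.sub humeas).mul hscont.measurable).mul hicont.measurable).neg
  have hwimeas : Measurable wi :=
    (((measurable_const.sub humeas).mul hscont.measurable).mul hicont.measurable).sub
      (measurable_const.mul hicont.measurable)
  -- bounds on compacts
  have hbound : ∀ b : ℝ, ∃ C, 0 ≤ C ∧ ∀ τ ∈ Set.Icc (0:ℝ) b, |s τ| ≤ C ∧ |i τ| ≤ C := by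
    intro b
    obtain ⟨C1, hC1⟩ := (isCompact_Icc (a := (0:ℝ)) (b := b)).exists_bound_of_continuousOn
      hscont.continuousOn
    obtain ⟨C2, hC2⟩ := (isCompact_Icc (a := (0:ℝ)) (b := b)).exists_bound_of_continuousOn
      hicont.continuousOn
    refine ⟨max (max C1 C2) 0, le_max_right _ _, fun τ hτ => ⟨?_, ?_⟩⟩
    · exact le_trans (by simpa using hC1 τ hτ) (le_max_of_le_left (le_max_left _ _))
    · exact le_trans (by simpa using hC2 τ hτ) (le_max_of_le_left (le_max_right _ _))
  -- positivity
  have hspos : ∀ t, 0 ≤ t → 0 < s t := by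
    refine pos_persist hscont hwsmeas (by rw [hs0]; exact hs₀) (fun t ht => by
      rw [hs0]; exact hseq t ht) ?_
    intro b _
    obtain ⟨C, hC0, hC⟩ := hbound b
    refine ⟨β * C, mul_nonneg (by linarith) hC0, fun τ hτ => ?_⟩
    have h1 := (hucoef τ).1; have h2 := (hucoef τ).2
    have h3 := (hC τ hτ).2
    calc |ws τ| = (β - u τ) * |s τ| * |i τ| := by
          rw [hws]; simp only [abs_neg, abs_mul, abs_of_nonneg (by linarith : (0:ℝ) ≤ β - u τ)]
      _ ≤ β * |s τ| * C := by
          apply mul_le_mul (mul_le_mul h2 le_rfl (abs_nonneg _) (by linarith)) h3 (abs_nonneg _)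
          exact mul_nonneg (by linarith) (abs_nonneg _)
      _ = β * C * |s τ| := by ring
  have hipos : ∀ t, 0 ≤ t → 0 < i t := by
    refine pos_persist hicont hwimeas (by rw [hi0]; exact hi₀) (fun t ht => by
      rw [hi0]; exact hieq t ht) ?_
    intro b _
    obtain ⟨C, hC0, hC⟩ := hbound b
    refine ⟨β * C + γ, add_nonneg (mul_nonneg (by linarith) hC0) hγ.le, fun τ hτ => ?_⟩
    have h1 := (hucoef τ).1; have h2 := (hucoef τ).2
    have h3 := (hC τ hτ).1
    calc |wi τ| ≤ |(β - u τ) * s τ * i τ| + |γ * i τ| := abs_sub _ _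
      _ = (β - u τ) * |s τ| * |i τ| + γ * |i τ| := by
          rw [abs_mul, abs_mul, abs_mul, abs_of_nonneg (by linarith : (0:ℝ) ≤ β - u τ),
            abs_of_nonneg hγ.le]
      _ ≤ β * C * |i τ| + γ * |i τ| := by
          have : (β - u τ) * |s τ| ≤ β * C :=
            mul_le_mul h2 h3 (abs_nonneg _) (by linarith)
          nlinarith [abs_nonneg (i τ)]
      _ = (β * C + γ) * |i τ| := by ring
  -- interval integrability on nonneg intervals
  have hwsint : ∀ x y : ℝ, 0 ≤ x → 0 ≤ y → IntervalIntegrable ws MeasureTheory.volume x y := by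
    intro x y hx hy
    obtain ⟨C, hC0, hC⟩ := hbound (max x y)
    refine aux_intInt hwsmeas (C := β * C * C) fun τ hτ => ?_
    have hτ' : τ ∈ Set.Icc (0:ℝ) (max x y) :=
      Set.uIcc_subset_Icc ⟨hx, le_max_left _ _⟩ ⟨hy, le_max_right _ _⟩ hτ
    have h2 := (hucoef τ).2
    have h3 := hC τ hτ'
    have h0u : (0:ℝ) ≤ β - u τ := le_trans hkpos.le (hucoef τ).1
    calc |ws τ| = (β - u τ) * |s τ| * |i τ| := by
          rw [hws]; simp only [abs_neg, abs_mul, abs_of_nonneg h0u]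
      _ ≤ β * C * C := by
          apply mul_le_mul (mul_le_mul h2 h3.1 (abs_nonneg _) (by linarith)) h3.2 (abs_nonneg _)
          exact mul_nonneg (by linarith) hC0
  have hwiint : ∀ x y : ℝ, 0 ≤ x → 0 ≤ y → IntervalIntegrable wi MeasureTheory.volume x y := by
    intro x y hx hy
    obtain ⟨C, hC0, hC⟩ := hbound (max x y)
    refine aux_intInt hwimeas (C := β * C * C + γ * C) fun τ hτ => ?_
    have hτ' : τ ∈ Set.Icc (0:ℝ) (max x y) :=
      Set.uIcc_subset_Icc ⟨hx, le_max_left _ _⟩ ⟨hy, le_max_right _ _⟩ hτ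
    have h2 := (hucoef τ).2
    have h3 := hC τ hτ'
    have h0u : (0:ℝ) ≤ β - u τ := le_trans hkpos.le (hucoef τ).1
    calc |wi τ| ≤ |(β - u τ) * s τ * i τ| + |γ * i τ| := abs_sub _ _
      _ = (β - u τ) * |s τ| * |i τ| + γ * |i τ| := by
          rw [abs_mul, abs_mul, abs_mul, abs_of_nonneg h0u, abs_of_nonneg hγ.le]
      _ ≤ β * C * C + γ * C := by
          have hb1 : (β - u τ) * |s τ| * |i τ| ≤ β * C * C := by
            apply mul_le_mul (mul_le_mul h2 h3.1 (abs_nonneg _) (by linarith)) h3.2 (abs_nonneg _)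
            exact mul_nonneg (by linarith) hC0
          have hb2 : γ * |i τ| ≤ γ * C := mul_le_mul_of_nonneg_left h3.2 hγ.le
          linarith
  -- increments
  have hsinc : ∀ x y : ℝ, 0 ≤ x → x ≤ y → s y - s x = ∫ τ in x..y, ws τ := by
    intro x y hx hxy
    have h1 := hseq x hx
    have h2 := hseq y (hx.trans hxy)
    have h3 : (∫ τ in (0:ℝ)..x, ws τ) + ∫ τ in x..y, ws τ = ∫ τ in (0:ℝ)..y, ws τ :=
      intervalIntegral.integral_add_adjacent_intervals (hwsint 0 x le_rfl hx)
        (hwsint x y hx (hx.trans hxy))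
    rw [hws] at *
    linarith
  have hiinc : ∀ x y : ℝ, 0 ≤ x → x ≤ y → i y - i x = ∫ τ in x..y, wi τ := by
    intro x y hx hxy
    have h1 := hieq x hx
    have h2 := hieq y (hx.trans hxy)
    have h3 : (∫ τ in (0:ℝ)..x, wi τ) + ∫ τ in x..y, wi τ = ∫ τ in (0:ℝ)..y, wi τ :=
      intervalIntegral.integral_add_adjacent_intervals (hwiint 0 x le_rfl hx)
        (hwiint x y hx (hx.trans hxy))
    rw [hwi] at *
    linarith
  -- sum identity
  have hsum : ∀ t, 0 ≤ t → s t + i t = s₀ + i₀ - γ * ∫ τ in (0:ℝ)..t, i τ := by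
    intro t ht
    have h1 := hseq t ht
    have h2 := hieq t ht
    have h3 : (∫ τ in (0:ℝ)..t, ws τ) + (∫ τ in (0:ℝ)..t, wi τ)
        = ∫ τ in (0:ℝ)..t, (ws τ + wi τ) :=
      (intervalIntegral.integral_add (hwsint 0 t le_rfl ht) (hwiint 0 t le_rfl ht)).symm
    have h4 : (∫ τ in (0:ℝ)..t, (ws τ + wi τ)) = -γ * ∫ τ in (0:ℝ)..t, i τ := by
      have : (fun τ => ws τ + wi τ) = fun τ => -γ * i τ := by
        funext τ; rw [hws, hwi]; ring
      rw [this, intervalIntegral.integral_const_mul]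
    rw [hws, hwi] at *
    linarith
  -- the comparison s t ≤ s₀ exp(-k ∫ i)
  set I : ℝ → ℝ := fun t => ∫ τ in (0:ℝ)..t, i τ with hI
  have hI0 : I 0 = 0 := by simp [hI]
  have hId : ∀ t : ℝ, HasDerivAt I (i t) t := fun t =>
    intervalIntegral.integral_hasDerivAt_right (hicont.intervalIntegrable 0 t)
      hicont.stronglyMeasurable.stronglyMeasurableAtFilter hicont.continuousAt
  set E : ℝ → ℝ := fun t => s₀ * Real.exp (-k * I t) with hE
  have hEd : ∀ t : ℝ, HasDerivAt E (-k * i t * E t) t := by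
    intro t
    have h1 : HasDerivAt (fun τ => -k * I τ) (-k * i t) t := (hId t).const_mul (-k)
    have h2 : HasDerivAt (fun τ => Real.exp (-k * I τ)) (Real.exp (-k * I t) * (-k * i t)) t :=
      h1.exp
    have := h2.const_mul s₀
    exact this.congr_deriv (by simp only [hE]; ring)
  have hEcont : Continuous E :=
    continuous_iff_continuousAt.mpr fun t => (hEd t).continuousAt
  have hcomp : ∀ t, 0 ≤ t → s t ≤ E t := by
    intro t₁ ht₁
    by_contra hc
    push_neg at hc
    set φ : ℝ → ℝ := fun t => s t - E t with hφ
    have hφcont : Continuous φ := hscont.sub hEcont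
    have hφ0 : φ 0 = 0 := by simp [hφ, hE, hI0, hs0]
    have hφt₁ : 0 < φ t₁ := by simp [hφ]; linarith
    have ht₁pos : 0 < t₁ := by
      rcases lt_or_eq_of_le ht₁ with h | h
      · exact h
      · exfalso; rw [← h] at hφt₁; rw [hφ0] at hφt₁; exact lt_irrefl _ hφt₁
    obtain ⟨b, hb0, hbt₁, hφb, hφpos⟩ := exists_last_zero hφcont hφ0.le ht₁pos hφt₁
    -- φ t₁ = ∫ b..t₁ (ws - E')
    have hEinc : E t₁ - E b = ∫ τ in b..t₁, -k * i τ * E τ :=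
      (intervalIntegral.integral_eq_sub_of_hasDerivAt (fun τ _ => hEd τ)
        (((continuous_const.mul hicont).mul hEcont).intervalIntegrable b t₁)).symm
    have hsinc' := hsinc b t₁ hb0 hbt₁.le
    have hint : (∫ τ in b..t₁, (ws τ - -k * i τ * E τ)) ≤ 0 := by
      have hmono := intervalIntegral.integral_mono_on (f := fun τ => ws τ - -k * i τ * E τ)
        (g := fun _ => (0:ℝ)) hbt₁.le
        ((hwsint b t₁ hb0 (hb0.trans hbt₁.le)).sub
          (((continuous_const.mul hicont).mul hEcont).intervalIntegrable b t₁))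
        intervalIntegrable_const ?_
      · simpa using hmono
      · intro τ hτ
        have hτ0 : 0 ≤ τ := hb0.trans hτ.1
        have hipos' : 0 < i τ := hipos τ hτ0
        have hspos' : 0 < s τ := hspos τ hτ0
        have hφnn : 0 ≤ φ τ := by
          rcases lt_or_eq_of_le hτ.1 with h | h
          · exact (hφpos τ h hτ.2).le
          · rw [← h, hφb]
        have h1 := (hucoef τ).1
        have hkey : ws τ ≤ -k * s τ * i τ := by
          rw [hws]
          simp only
          nlinarith [mul_nonneg (mul_nonneg (by linarith : (0:ℝ) ≤ β - u τ - k) hspos'.le)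
            hipos'.le]
        have hφeq : φ τ = s τ - E τ := rfl
        have hφnn' : 0 ≤ s τ - E τ := by rw [← hφeq]; exact hφnn
        have hprod : 0 ≤ k * i τ * (s τ - E τ) :=
          mul_nonneg (mul_nonneg hkpos.le hipos'.le) hφnn'
        show ws τ - -k * i τ * E τ ≤ 0
        nlinarith [hkey, hprod]
    have : φ t₁ - φ b = ∫ τ in b..t₁, (ws τ - -k * i τ * E τ) := by
      rw [intervalIntegral.integral_sub (f := ws) (g := fun τ => -k * i τ * E τ)
        (hwsint b t₁ hb0 (hb0.trans hbt₁.le))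
        (((continuous_const.mul hicont).mul hEcont).intervalIntegrable b t₁)]
      rw [hφ]
      simp only
      rw [← hsinc', ← hEinc]
      ring
    rw [hφb] at this
    have hφt₁' := hφpos t₁ hbt₁ le_rfl
    linarith
  -- main case split
  by_cases hcase : s₀ < ρ
  · simp only [PhiMax]
    rw [if_pos (by rw [← hk, ← hρ]; exact hcase)]
    have := hadm 0 le_rfl
    rwa [hi0] at this
  · push_neg at hcase
    simp only [PhiMax]
    rw [if_neg (by rw [← hk, ← hρ]; exact not_lt.mpr hcase)]
    rw [← hk, ← hρ]
    by_contra hcon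
    push_neg at hcon
    by_cases hreach : ∃ t, 0 ≤ t ∧ s t ≤ ρ
    · obtain ⟨t, ht0, htρ⟩ := hreach
      have hivt : ρ ∈ s '' Set.Icc 0 t := by
        apply intermediate_value_Icc' ht0 hscont.continuousOn
        rw [hs0]
        exact ⟨htρ, hcase⟩
      obtain ⟨t', ht'mem, ht'⟩ := hivt
      have ht'0 : 0 ≤ t' := ht'mem.1
      have hsum' := hsum t' ht'0
      rw [ht'] at hsum'
      -- log estimate
      have hcomp' := hcomp t' ht'0
      rw [ht'] at hcomp'
      have hlog : k * I t' ≤ Real.log s₀ - Real.log ρ := by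
        have h1 : Real.log ρ ≤ Real.log (s₀ * Real.exp (-k * I t')) :=
          Real.log_le_log hρpos hcomp'
        rw [Real.log_mul (ne_of_gt hs₀) (Real.exp_ne_zero _), Real.log_exp] at h1
        linarith
      have hγI : γ * I t' ≤ ρ * (Real.log s₀ - Real.log ρ) := by
        have := mul_le_mul_of_nonneg_left hlog hρpos.le
        calc γ * I t' = ρ * (k * I t') := by rw [← hkρ]; ring
          _ ≤ ρ * (Real.log s₀ - Real.log ρ) := this
      have hadm' := hadm t' ht'0
      linarith
    · push_neg at hreach
      have hsgt : ∀ t, 0 ≤ t → ρ < s t := hreach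
      have hs₀gt : ρ < s₀ := by rw [← hs0]; exact hsgt 0 le_rfl
      -- i is nondecreasing
      have himono : ∀ x y, 0 ≤ x → x ≤ y → i x ≤ i y := by
        intro x y hx hxy
        have h1 := hiinc x y hx hxy
        have h2 : 0 ≤ ∫ τ in x..y, wi τ := by
          apply intervalIntegral.integral_nonneg hxy
          intro τ hτ
          have hτ0 : 0 ≤ τ := hx.trans hτ.1
          have h3 := (hucoef τ).1
          have h4 := hsgt τ hτ0
          have h5 := (hipos τ hτ0).le
          rw [hwi]
          simp only
          have h6 : γ ≤ (β - u τ) * s τ := by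
            calc γ = k * ρ := hkρ.symm
              _ ≤ k * s τ := by nlinarith
              _ ≤ (β - u τ) * s τ := by nlinarith
          nlinarith
        linarith
      -- I t ≥ i₀ * t
      have hIlb : ∀ t, 0 ≤ t → i₀ * t ≤ I t := by
        intro t ht
        rw [hI]
        calc i₀ * t = ∫ _ in (0:ℝ)..t, i₀ := by simp [mul_comm]
          _ ≤ ∫ τ in (0:ℝ)..t, i τ := by
              apply intervalIntegral.integral_mono_on ht intervalIntegrable_const
                (hicont.intervalIntegrable 0 t)
              intro τ hτ
              rw [← hi0]
              exact himono 0 τ le_rfl hτ.1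
      -- choose a large time
      set t := (Real.log s₀ - Real.log ρ + 1) / (k * i₀) with htdef
      have hnum : 0 < Real.log s₀ - Real.log ρ + 1 := by
        have := Real.log_lt_log hρpos hs₀gt
        linarith
      have htpos : 0 < t := div_pos hnum (by positivity)
      have h1 : s t ≤ s₀ * Real.exp (-k * I t) := hcomp t htpos.le
      have h2 : Real.exp (-k * I t) ≤ Real.exp (-k * (i₀ * t)) := by
        apply Real.exp_le_exp.mpr
        have := hIlb t htpos.le
        nlinarith
      have h3 : k * (i₀ * t) = Real.log s₀ - Real.log ρ + 1 := by
        rw [htdef]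
        field_simp
      have h4 : s₀ * Real.exp (-(Real.log s₀ - Real.log ρ + 1)) < ρ := by
        rw [show -(Real.log s₀ - Real.log ρ + 1) = Real.log ρ - Real.log s₀ + (-1) by ring]
        rw [Real.exp_add, Real.exp_sub, Real.exp_log hρpos, Real.exp_log hs₀]
        rw [show s₀ * (ρ / s₀ * Real.exp (-1)) = ρ * Real.exp (-1) by field_simp]
        have : Real.exp (-1) < 1 := by
          rw [Real.exp_lt_one_iff]; norm_num
        nlinarith
      have h5 := hsgt t htpos.le
      rw [show -k * (i₀ * t) = -(k * (i₀ * t)) by ring, h3] at h2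
      nlinarith [Real.exp_pos (-k * I t)]

set_option maxHeartbeats 8000000 in
lemma sir_exists (k γ s₀ i₀ : ℝ) (hk : 0 < k) (hγ : 0 < γ) (hs₀ : 0 < s₀) (hi₀ : 0 < i₀) :
    ∃ s i : ℝ → ℝ, Continuous s ∧ Continuous i ∧
      (∀ t, 0 ≤ t → s t = s₀ + ∫ τ in (0:ℝ)..t, -(k * s τ * i τ)) ∧
      (∀ t, 0 ≤ t → i t = i₀ + ∫ τ in (0:ℝ)..t, (k * s τ * i τ - γ * i τ)) ∧
      (∀ t, 0 ≤ t → 0 < s t ∧ s t ≤ s₀) ∧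
      (∀ t, 0 ≤ t → i t + s t - (γ/k) * Real.log (s t)
        = i₀ + s₀ - (γ/k) * Real.log s₀) := by
  set ρ : ℝ := γ / k with hρdef
  have hρpos : 0 < ρ := div_pos hγ hk
  have hkρ : k * ρ = γ := by rw [hρdef]; field_simp
  set V : ℝ := i₀ + s₀ - ρ * Real.log s₀ with hV
  set J : ℝ → ℝ := fun x => V - x + ρ * Real.log x with hJ
  have hJs₀ : J s₀ = i₀ := by
    show V - s₀ + ρ * Real.log s₀ = i₀
    rw [hV]; ring
  have hJca : ∀ x : ℝ, x ≠ 0 → ContinuousAt J x := by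
    intro x hx
    rw [hJ]
    exact (continuousAt_const.sub continuousAt_id).add
      (continuousAt_const.mul (Real.continuousAt_log hx))
  have hJd : ∀ x : ℝ, 0 < x → HasDerivAt J (-1 + ρ / x) x := by
    intro x hx
    rw [hJ]
    have h1 : HasDerivAt (fun y : ℝ => V - y) (-1) x := by
      simpa using (hasDerivAt_id x).const_sub V
    have h2 : HasDerivAt (fun y : ℝ => ρ * Real.log y) (ρ * x⁻¹) x :=
      (Real.hasDerivAt_log hx.ne').const_mul ρ
    have := h1.add h2
    exact this.congr_deriv (by rw [div_eq_mul_inv])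
  -- a point where J is negative
  set x₁ : ℝ := min (s₀/2) (Real.exp ((-|V| - 1)/ρ)) with hx₁def
  have hx₁pos : 0 < x₁ := lt_min (by linarith) (Real.exp_pos _)
  have hx₁lt : x₁ < s₀ := lt_of_le_of_lt (min_le_left _ _) (by linarith)
  have hJx₁ : J x₁ < 0 := by
    have hlog : Real.log x₁ ≤ (-|V| - 1)/ρ := by
      have := Real.log_le_log hx₁pos (min_le_right (s₀/2) (Real.exp ((-|V| - 1)/ρ)))
      rwa [Real.log_exp] at this
    have h2 : ρ * Real.log x₁ ≤ -|V| - 1 := by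
      have := mul_le_mul_of_nonneg_left hlog hρpos.le
      rwa [mul_div_cancel₀ _ hρpos.ne'] at this
    have h3 : V ≤ |V| := le_abs_self V
    rw [hJ]; simp only
    linarith
  -- a zero of J below s₀
  have hzero : ∃ x₂ ∈ Set.Icc x₁ s₀, J x₂ = 0 := by
    have hcont : ContinuousOn J (Set.Icc x₁ s₀) := fun x hx =>
      (hJca x (ne_of_gt (lt_of_lt_of_le hx₁pos hx.1))).continuousWithinAt
    have := intermediate_value_Icc hx₁lt.le hcont
    have h0 : (0:ℝ) ∈ Set.Icc (J x₁) (J s₀) := ⟨hJx₁.le, by rw [hJs₀]; exact hi₀.le⟩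
    obtain ⟨x₂, hx₂, hJx₂⟩ := this h0
    exact ⟨x₂, hx₂, hJx₂⟩
  obtain ⟨x₂, hx₂mem, hJx₂⟩ := hzero
  have hx₂pos : 0 < x₂ := lt_of_lt_of_le hx₁pos hx₂mem.1
  -- the last zero σ of J in (0, s₀)
  set S : Set ℝ := Set.Icc x₂ s₀ ∩ J ⁻¹' {0} with hSdef
  have hSclosed : IsClosed S := by
    have hcont : ContinuousOn J (Set.Icc x₂ s₀) := fun x hx =>
      (hJca x (ne_of_gt (lt_of_lt_of_le hx₂pos hx.1))).continuousWithinAt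
    exact hcont.preimage_isClosed_of_isClosed isClosed_Icc isClosed_singleton
  have hSne : S.Nonempty := ⟨x₂, ⟨le_refl _, hx₂mem.2⟩, hJx₂⟩
  have hSbdd : BddAbove S := ⟨s₀, fun x hx => hx.1.2⟩
  have hσS : sSup S ∈ S := hSclosed.csSup_mem hSne hSbdd
  set σ : ℝ := sSup S with hσdef
  have hσpos : 0 < σ := lt_of_lt_of_le hx₂pos hσS.1.1
  have hJσ : J σ = 0 := hσS.2
  have hσlt : σ < s₀ := by
    rcases lt_or_eq_of_le hσS.1.2 with h | h
    · exact h
    · exfalso; rw [h] at hJσ; rw [hJs₀] at hJσ; linarith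
  have hJpos : ∀ y, σ < y → y ≤ s₀ → 0 < J y := by
    intro y hy hys₀
    by_contra hc
    push_neg at hc
    have hypos : 0 < y := hσpos.trans hy
    have hcont : ContinuousOn J (Set.Icc y s₀) := fun x hx =>
      (hJca x (ne_of_gt (lt_of_lt_of_le hypos hx.1))).continuousWithinAt
    have h0 : (0:ℝ) ∈ Set.Icc (J y) (J s₀) := ⟨hc, by rw [hJs₀]; exact hi₀.le⟩
    obtain ⟨z, hz, hJz⟩ := intermediate_value_Icc hys₀ hcont h0
    have hzS : z ∈ S := ⟨⟨le_trans hσS.1.1 (le_trans hy.le hz.1), hz.2⟩, hJz⟩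
    have := le_csSup hSbdd hzS
    have : y ≤ σ := le_trans hz.1 this
    linarith
  -- a margin above s₀ where J is positive
  have hJnhds : ∃ s₁, s₀ < s₁ ∧ ∀ y, σ < y → y < s₁ → 0 < J y := by
    have hca : ContinuousAt J s₀ := hJca s₀ hs₀.ne'
    have hmem : Set.Ioi (0:ℝ) ∈ nhds (J s₀) := by
      rw [hJs₀]; exact Ioi_mem_nhds hi₀
    have := hca.preimage_mem_nhds hmem
    rw [Metric.mem_nhds_iff] at this
    obtain ⟨ε, hε, hball⟩ := this
    refine ⟨s₀ + ε/2, by linarith, fun y hy hys₁ => ?_⟩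
    by_cases hcase : y ≤ s₀
    · exact hJpos y hy hcase
    · push_neg at hcase
      have : y ∈ Metric.ball s₀ ε := by
        rw [Metric.mem_ball, Real.dist_eq, abs_of_pos (by linarith : (0:ℝ) < y - s₀)]
        linarith
      exact hball this
  obtain ⟨s₁, hs₁gt, hJpos'⟩ := hJnhds
  set O : Set ℝ := Set.Ioo σ s₁ with hOdef
  have hO : IsOpen O := isOpen_Ioo
  have hOsub : Set.Ioc σ s₀ ⊆ O := fun x hx => ⟨hx.1, lt_of_le_of_lt hx.2 hs₁gt⟩
  have hs₀O : s₀ ∈ O := ⟨hσlt, hs₁gt⟩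
  have hJposO : ∀ x ∈ O, 0 < J x := fun x hx => hJpos' x hx.1 hx.2
  have hxposO : ∀ x ∈ O, 0 < x := fun x hx => hσpos.trans hx.1
  set f : ℝ → ℝ := fun x => (k * x * J x)⁻¹ with hfdef
  have hfO : ContinuousOn f O := by
    apply ContinuousOn.inv₀
    · exact ((continuous_const.mul continuous_id).continuousOn).mul
        (fun x hx => (hJca x (ne_of_gt (hxposO x hx))).continuousWithinAt)
    · intro x hx
      have := hxposO x hx; have := hJposO x hx
      positivity
  have hfpos : ∀ x ∈ O, 0 < f x := by
    intro x hx
    have := hxposO x hx; have := hJposO x hx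
    rw [hfdef]; positivity
  have hfint : ∀ x y, x ∈ O → y ∈ O → IntervalIntegrable f MeasureTheory.volume x y := by
    intro x y hx hy
    exact (hfO.mono (Set.ordConnected_Ioo.uIcc_subset hx hy)).intervalIntegrable
  set F : ℝ → ℝ := fun x => ∫ τ in x..s₀, f τ with hFdef
  have hFs₀ : F s₀ = 0 := by rw [hFdef]; simp
  have hFd : ∀ x ∈ O, HasDerivAt F (-(f x)) x := by
    intro x hx
    have h1 : HasDerivAt (fun u => ∫ τ in s₀..u, f τ) (f x) x :=
      intervalIntegral.integral_hasDerivAt_right (hfint s₀ x hs₀O hx)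
        (hfO.stronglyMeasurableAtFilter hO x hx) (hfO.continuousAt (hO.mem_nhds hx))
    have h2 : F = fun u => -∫ τ in s₀..u, f τ := by
      funext u; rw [hFdef]; simp only; rw [intervalIntegral.integral_symm]
    rw [h2]; exact h1.neg
  have hFsplit : ∀ a b, a ∈ O → b ∈ O → F a = (∫ τ in a..b, f τ) + F b := by
    intro a b ha hb
    rw [hFdef]; simp only
    rw [← intervalIntegral.integral_add_adjacent_intervals (hfint a b ha hb)
      (hfint b s₀ hb hs₀O)]
  have hFanti : ∀ a b, a ∈ Set.Ioc σ s₀ → b ∈ Set.Ioc σ s₀ → a < b → F b < F a := by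
    intro a b ha hb hab
    have h1 := hFsplit a b (hOsub ha) (hOsub hb)
    have h2 : 0 < ∫ τ in a..b, f τ :=
      intervalIntegral_pos_of_pos_on (hfint a b (hOsub ha) (hOsub hb))
        (fun x hx => hfpos x ⟨ha.1.trans hx.1, hx.2.trans_le (hb.2.trans hs₁gt.le)⟩) hab
    linarith
  have hFantile : ∀ a b, a ∈ Set.Ioc σ s₀ → b ∈ Set.Ioc σ s₀ → a ≤ b → F b ≤ F a := by
    intro a b ha hb hab
    rcases lt_or_eq_of_le hab with h | h
    · exact (hFanti a b ha hb h).le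
    · rw [h]
  have hFuniq : ∀ a b, a ∈ Set.Ioc σ s₀ → b ∈ Set.Ioc σ s₀ → F a = F b → a = b := by
    intro a b ha hb hFab
    rcases lt_trichotomy a b with h | h | h
    · exfalso; have := hFanti a b ha hb h; linarith
    · exact h
    · exfalso; have := hFanti b a hb ha h; linarith
  -- upper bound for J near σ
  have hJub : ∀ x ∈ Set.Icc σ s₀, J x ≤ (ρ/σ) * (x - σ) := by
    intro x hx
    have hxpos : 0 < x := lt_of_lt_of_le hσpos hx.1
    have hlog : Real.log x - Real.log σ ≤ (x - σ)/σ := by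
      have h1 : Real.log (x/σ) ≤ x/σ - 1 := Real.log_le_sub_one_of_pos (by positivity)
      rw [Real.log_div hxpos.ne' hσpos.ne'] at h1
      have h2 : x/σ - 1 = (x - σ)/σ := by field_simp
      linarith
    have hJx : J x = -(x - σ) + ρ * (Real.log x - Real.log σ) := by
      have h0 : J σ = 0 := hJσ
      rw [hJ] at h0 ⊢
      simp only at h0 ⊢
      linarith
    rw [hJx]
    have h2 : ρ * (Real.log x - Real.log σ) ≤ ρ * ((x - σ)/σ) :=
      mul_le_mul_of_nonneg_left hlog hρpos.le
    have h3 : ρ * ((x - σ)/σ) = (ρ/σ) * (x - σ) := by ring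
    have h4 : σ ≤ x := hx.1
    linarith
  set c : ℝ := (k * s₀ * (ρ/σ))⁻¹ with hcdef
  have hcpos : 0 < c := by rw [hcdef]; positivity
  -- lower bound for F
  have hFlb : ∀ x, σ < x → x ≤ s₀ →
      c * (Real.log (s₀ - σ) - Real.log (x - σ)) ≤ F x := by
    intro x hxσ hxs₀
    have hxO : x ∈ O := hOsub ⟨hxσ, hxs₀⟩
    have hptwise : ∀ τ ∈ Set.Icc x s₀, c * (τ - σ)⁻¹ ≤ f τ := by
      intro τ hτ
      have hτσ : σ < τ := lt_of_lt_of_le hxσ hτ.1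
      have hτpos : 0 < τ := hσpos.trans hτσ
      have hJτpos : 0 < J τ := hJpos τ hτσ hτ.2
      have hub : k * τ * J τ ≤ (k * s₀ * (ρ/σ)) * (τ - σ) := by
        have h1 : J τ ≤ (ρ/σ) * (τ - σ) := hJub τ ⟨hτσ.le, hτ.2⟩
        have h2 : k * τ ≤ k * s₀ := by nlinarith [hτ.2]
        have h3 : 0 < k * τ := by positivity
        calc k * τ * J τ = (k * τ) * (J τ) := by ring
          _ ≤ (k * τ) * ((ρ/σ) * (τ - σ)) := mul_le_mul_of_nonneg_left h1 h3.le
          _ ≤ (k * s₀) * ((ρ/σ) * (τ - σ)) := mul_le_mul_of_nonneg_right h2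
              (mul_nonneg (div_nonneg hρpos.le hσpos.le) (by linarith))
          _ = (k * s₀ * (ρ/σ)) * (τ - σ) := by ring
      have hpos1 : 0 < k * τ * J τ := by positivity
      have h4 : f τ = (k * τ * J τ)⁻¹ := rfl
      rw [h4]
      have h5 : ((k * s₀ * (ρ/σ)) * (τ - σ))⁻¹ ≤ (k * τ * J τ)⁻¹ :=
        inv_anti₀ hpos1 hub
      have h6 : ((k * s₀ * (ρ/σ)) * (τ - σ))⁻¹ = c * (τ - σ)⁻¹ := by
        rw [hcdef, mul_inv]
      rw [h6] at h5
      exact h5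
    have hgint : IntervalIntegrable (fun τ => c * (τ - σ)⁻¹) MeasureTheory.volume x s₀ := by
      apply ContinuousOn.intervalIntegrable
      intro τ hτ
      rw [Set.uIcc_of_le hxs₀] at hτ
      have h7 : σ < τ := lt_of_lt_of_le hxσ hτ.1
      apply ContinuousAt.continuousWithinAt
      exact continuousAt_const.mul
        (((continuousAt_id.sub continuousAt_const).inv₀ (sub_ne_zero.mpr (ne_of_gt h7))))
    have hmono := intervalIntegral.integral_mono_on hxs₀ hgint
      ((hfO.mono (Set.ordConnected_Ioo.uIcc_subset hxO hs₀O)).intervalIntegrable) hptwise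
    have hcalc : (∫ τ in x..s₀, c * (τ - σ)⁻¹)
        = c * (Real.log (s₀ - σ) - Real.log (x - σ)) := by
      rw [intervalIntegral.integral_const_mul]
      have h1 : (∫ τ in x..s₀, (τ - σ)⁻¹) = ∫ τ in (x - σ)..(s₀ - σ), τ⁻¹ := by
        have := intervalIntegral.integral_comp_sub_right (a := x) (b := s₀)
          (fun τ => τ⁻¹) σ
        exact this
      rw [h1, integral_inv (by
        rw [Set.uIcc_of_le (by linarith : x - σ ≤ s₀ - σ)]
        intro hmem
        have := hmem.1
        have : (0:ℝ) < x - σ := by linarith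
        linarith [hmem.1] )]
      rw [Real.log_div (by linarith : s₀ - σ ≠ 0) (by
        have : (0:ℝ) < x - σ := by linarith
        linarith : x - σ ≠ 0)]
    rw [hcalc] at hmono
    exact hmono
  -- surjectivity of F onto [0, ∞)
  have hsurj : ∀ t, 0 ≤ t → ∃ x, x ∈ Set.Ioc σ s₀ ∧ F x = t := by
    intro t ht
    set x' : ℝ := σ + (s₀ - σ) * Real.exp (-(t/c) - 1) with hx'def
    have hexp1 : Real.exp (-(t/c) - 1) < 1 := by
      rw [Real.exp_lt_one_iff]
      have : 0 ≤ t/c := div_nonneg ht hcpos.le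
      linarith
    have hx'mem : x' ∈ Set.Ioo σ s₀ := by
      constructor
      · rw [hx'def]
        have : 0 < (s₀ - σ) * Real.exp (-(t/c) - 1) := by
          apply mul_pos (by linarith) (Real.exp_pos _)
        linarith
      · rw [hx'def]
        nlinarith [Real.exp_pos (-(t/c) - 1), hexp1]
    have hFx' : t < F x' := by
      have hlb := hFlb x' hx'mem.1 hx'mem.2.le
      have hlogx' : Real.log (x' - σ) = Real.log (s₀ - σ) + (-(t/c) - 1) := by
        rw [hx'def]
        have : σ + (s₀ - σ) * Real.exp (-(t/c) - 1) - σ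
            = (s₀ - σ) * Real.exp (-(t/c) - 1) := by ring
        rw [this, Real.log_mul (by linarith : s₀ - σ ≠ 0) (Real.exp_ne_zero _),
          Real.log_exp]
      have : c * (Real.log (s₀ - σ) - Real.log (x' - σ)) = t + c := by
        rw [hlogx']
        field_simp
        ring
      linarith
    have hFcont : ContinuousOn F (Set.Icc x' s₀) := by
      intro x hx
      have hxO : x ∈ O := hOsub ⟨lt_of_lt_of_le hx'mem.1 hx.1, hx.2⟩
      exact (hFd x hxO).continuousAt.continuousWithinAt
    have := intermediate_value_Icc' hx'mem.2.le hFcont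
    have hmem : t ∈ Set.Icc (F s₀) (F x') := by rw [hFs₀]; exact ⟨ht, hFx'.le⟩
    obtain ⟨y, hy, hFy⟩ := this hmem
    exact ⟨y, ⟨lt_of_lt_of_le hx'mem.1 hy.1, hy.2⟩, hFy⟩
  -- define the solution
  set sf : ℝ → ℝ := fun t => if h : 0 ≤ t then Classical.choose (hsurj t h) else s₀
    with hsfdef
  have hsf : ∀ t (h : 0 ≤ t), sf t ∈ Set.Ioc σ s₀ ∧ F (sf t) = t := by
    intro t h
    rw [hsfdef]; simp only [dif_pos h]
    exact Classical.choose_spec (hsurj t h)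
  have hsfneg : ∀ t : ℝ, t < 0 → sf t = s₀ := by
    intro t h
    rw [hsfdef]; simp only [dif_neg (not_le.mpr h)]
  have hsfmem : ∀ t : ℝ, sf t ∈ Set.Ioc σ s₀ := by
    intro t
    by_cases h : 0 ≤ t
    · exact (hsf t h).1
    · rw [hsfneg t (not_le.mp h)]; exact ⟨hσlt, le_refl _⟩
  have hsf0 : sf 0 = s₀ := by
    apply hFuniq _ _ (hsf 0 le_rfl).1 ⟨hσlt, le_refl _⟩
    rw [(hsf 0 le_rfl).2, hFs₀]
  -- continuity of sf
  have hsfcont : Continuous sf := by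
    rw [continuous_iff_continuousAt]
    intro t
    by_cases ht : 0 ≤ t
    · -- continuity at nonnegative t via order arguments
      rw [Metric.continuousAt_iff]
      intro ε hε
      have hx₀mem := (hsf t ht).1
      have hx₀F := (hsf t ht).2
      set x₀ : ℝ := sf t with hx₀def
      -- upper estimate
      have hδ₁ : ∃ δ₁ > 0, ∀ y, |y - t| < δ₁ → sf y < x₀ + ε := by
        by_cases hcase : s₀ < x₀ + ε
        · exact ⟨1, one_pos, fun y _ => lt_of_le_of_lt (hsfmem y).2 hcase⟩
        · push_neg at hcase
          have hx₀ε : x₀ + ε ∈ Set.Ioc σ s₀ := ⟨lt_of_lt_of_le hx₀mem.1 (by linarith), hcase⟩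
          have hFlt : F (x₀ + ε) < F x₀ := hFanti x₀ (x₀ + ε) hx₀mem hx₀ε (by linarith)
          refine ⟨t - F (x₀ + ε), by linarith, fun y hy => ?_⟩
          by_cases hy0 : 0 ≤ y
          · have h1 : F (x₀ + ε) < y := by
              have := abs_lt.mp hy
              linarith [this.1]
            by_contra hc
            push_neg at hc
            have : F (sf y) ≤ F (x₀ + ε) :=
              hFantile (x₀ + ε) (sf y) hx₀ε (hsfmem y) hc
            rw [(hsf y hy0).2] at this
            linarith
          · push_neg at hy0
            exfalso
            have h2 : 0 ≤ F (x₀ + ε) := by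
              rw [← hFs₀]
              exact hFantile (x₀ + ε) s₀ hx₀ε ⟨hσlt, le_refl _⟩ hcase
            have := abs_lt.mp hy
            linarith [this.1]
      -- lower estimate
      have hδ₂ : ∃ δ₂ > 0, ∀ y, |y - t| < δ₂ → x₀ - ε < sf y := by
        by_cases hcase : x₀ - ε ≤ σ
        · exact ⟨1, one_pos, fun y _ => lt_of_le_of_lt hcase (hsfmem y).1⟩
        · push_neg at hcase
          have hx₀ε : x₀ - ε ∈ Set.Ioc σ s₀ := ⟨hcase, by linarith [hx₀mem.2]⟩
          have hFgt : F x₀ < F (x₀ - ε) := hFanti (x₀ - ε) x₀ hx₀ε hx₀mem (by linarith)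
          refine ⟨F (x₀ - ε) - t, by linarith, fun y hy => ?_⟩
          by_cases hy0 : 0 ≤ y
          · have h1 : y < F (x₀ - ε) := by
              have := abs_lt.mp hy
              linarith [this.2]
            by_contra hc
            push_neg at hc
            have : F (x₀ - ε) ≤ F (sf y) :=
              hFantile (sf y) (x₀ - ε) (hsfmem y) hx₀ε hc
            rw [(hsf y hy0).2] at this
            linarith
          · push_neg at hy0
            rw [hsfneg y hy0]
            linarith [hx₀mem.2]
      obtain ⟨δ₁, hδ₁pos, hδ₁p⟩ := hδ₁
      obtain ⟨δ₂, hδ₂pos, hδ₂p⟩ := hδ₂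
      refine ⟨min δ₁ δ₂, lt_min hδ₁pos hδ₂pos, fun {y} hy => ?_⟩
      rw [Real.dist_eq] at hy ⊢
      have h1 := hδ₁p y (lt_of_lt_of_le hy (min_le_left _ _))
      have h2 := hδ₂p y (lt_of_lt_of_le hy (min_le_right _ _))
      rw [abs_lt]
      constructor <;> [linarith; linarith]
    · -- t < 0 : sf is locally constant
      push_neg at ht
      have hev : ∀ᶠ y in nhds t, sf y = s₀ := by
        filter_upwards [Iio_mem_nhds ht] with y hy
        exact hsfneg y hy
      have : ContinuousAt (fun _ : ℝ => s₀) t := continuousAt_const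
      apply this.congr
      filter_upwards [hev] with y hy
      exact hy.symm
  -- derivative of sf
  have hsfd : ∀ t : ℝ, 0 < t → HasDerivAt sf (-(k * sf t * J (sf t))) t := by
    intro t ht
    have hx₀ := hsf t ht.le
    set x₀ : ℝ := sf t with hx₀def
    have hx₀O : x₀ ∈ O := hOsub hx₀.1
    have hval : 0 < k * x₀ * J x₀ := by
      have h1 : 0 < x₀ := hxposO x₀ hx₀O
      have h2 : 0 < J x₀ := hJposO x₀ hx₀O
      positivity
    have hderiv := hFd x₀ hx₀O
    have hne : -(f x₀) ≠ 0 := by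
      have : f x₀ = (k * x₀ * J x₀)⁻¹ := rfl
      rw [this]
      simp only [ne_eq, neg_eq_zero, inv_eq_zero]
      exact hval.ne'
    have hfg : ∀ᶠ y in nhds t, F (sf y) = y := by
      filter_upwards [Ioi_mem_nhds ht] with y hy
      exact (hsf y (le_of_lt hy)).2
    have := HasDerivAt.of_local_left_inverse hsfcont.continuousAt hderiv hne hfg
    have heq : (-(f x₀))⁻¹ = -(k * x₀ * J x₀) := by
      have : f x₀ = (k * x₀ * J x₀)⁻¹ := rfl
      rw [this, ← inv_neg, inv_inv]
    rwa [heq] at this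
  -- the i component
  set igf : ℝ → ℝ := fun t => J (sf t) with higfdef
  have higfcont : Continuous igf := by
    rw [continuous_iff_continuousAt]
    intro t
    exact (hJca (sf t) (ne_of_gt (hσpos.trans (hsfmem t).1))).comp hsfcont.continuousAt
  have higfd : ∀ t : ℝ, 0 < t →
      HasDerivAt igf (k * sf t * igf t - γ * igf t) t := by
    intro t ht
    have hx₀pos : 0 < sf t := hσpos.trans (hsfmem t).1
    have hchain := (hJd (sf t) hx₀pos).comp t (hsfd t ht)
    have heq : (-1 + ρ / sf t) * -(k * sf t * J (sf t))
        = k * sf t * J (sf t) - (k * ρ) * J (sf t) := by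
      field_simp
      ring
    rw [hkρ] at heq
    rw [heq] at hchain
    exact hchain
  -- assemble
  refine ⟨sf, igf, hsfcont, higfcont, ?_, ?_, ?_, ?_⟩
  · -- s integral equation
    intro T hT
    rcases lt_or_eq_of_le hT with hT' | hT'
    · have := intervalIntegral.integral_eq_sub_of_hasDeriv_right_of_le hT'.le
        (hsfcont.continuousOn)
        (fun x hx => ((hsfd x hx.1).hasDerivWithinAt))
        (((continuous_const.mul hsfcont).mul higfcont).neg.intervalIntegrable 0 T)
      rw [hsf0] at this
      linarith [this]
    · rw [← hT']
      simp [hsf0]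
  · -- i integral equation
    intro T hT
    rcases lt_or_eq_of_le hT with hT' | hT'
    · have := intervalIntegral.integral_eq_sub_of_hasDeriv_right_of_le hT'.le
        (higfcont.continuousOn)
        (fun x hx => ((higfd x hx.1).hasDerivWithinAt))
        ((((continuous_const.mul hsfcont).mul higfcont).sub
          (continuous_const.mul higfcont)).intervalIntegrable 0 T)
      have higf0 : igf 0 = i₀ := by rw [higfdef]; simp only; rw [hsf0, hJs₀]
      rw [higf0] at this
      linarith [this]
    · rw [← hT']
      have higf0 : igf 0 = i₀ := by rw [higfdef]; simp only; rw [hsf0, hJs₀]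
      simp [higf0]
  · -- bounds
    intro t _
    exact ⟨hσpos.trans (hsfmem t).1, (hsfmem t).2⟩
  · -- conservation
    intro t _
    have : igf t = V - sf t + ρ * Real.log (sf t) := rfl
    rw [this, hV]
    ring

/-- Characterization of the viable set: `B = {(s,i) ∈ T : 0 < i ≤ Φ_max(s)}`. -/
theorem statement7 (β γ umax iM : ℝ) (hβ : 0 < β) (hγ : 0 < γ)
    (humax : 0 < umax) (humaxβ : umax < β) (hiM : iM ∈ Set.Ioo (0:ℝ) 1) :
    ViableSet β γ umax iM
      = {p : ℝ × ℝ | p ∈ Triangle ∧ 0 < p.2 ∧ p.2 ≤ PhiMax β γ umax iM p.1} := by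
  ext p
  constructor
  · rintro ⟨hT, u, s, i, hu, hsol, hadm⟩
    exact ⟨hT, hT.2.2.1, forward_dir hγ humax humaxβ hu hsol hadm hT.1 hT.2.2.1⟩
  · rintro ⟨hT, hpos, hle⟩
    refine ⟨hT, ?_⟩
    have hkpos : 0 < β - umax := by linarith
    obtain ⟨s, i, hscont, hicont, hseq, hieq, hbounds, hcons⟩ :=
      sir_exists (β - umax) γ p.1 p.2 hkpos hγ hT.1 hT.2.2.1
    set ρ : ℝ := γ / (β - umax) with hρdef
    have hρpos : 0 < ρ := div_pos hγ hkpos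
    refine ⟨fun _ => umax, s, i,
      ⟨measurable_const, fun t => ⟨humax.le, le_refl _⟩⟩, ⟨hscont, hicont, ?_, ?_⟩, ?_⟩
    · intro t ht
      exact hseq t ht
    · intro t ht
      exact hieq t ht
    · -- admissibility
      intro t ht
      have hb := hbounds t ht
      have hc := hcons t ht
      by_cases hcase : p.1 < ρ
      · -- here Φmax = iM and the trajectory stays below p.2
        have hPhi : PhiMax β γ umax iM p.1 = iM := by
          simp only [PhiMax]
          rw [if_pos (by rw [← hρdef]; exact hcase)]
        rw [hPhi] at hle
        have hganti : p.1 - ρ * Real.log p.1 ≤ s t - ρ * Real.log (s t) :=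
          g_anti hρpos hb.1 hb.2 (le_of_lt hcase)
        linarith
      · push_neg at hcase
        have hPhi : PhiMax β γ umax iM p.1
            = ρ + iM - p.1 + ρ * (Real.log p.1 - Real.log ρ) := by
          simp only [PhiMax]
          rw [if_neg (by rw [← hρdef]; exact not_lt.mpr hcase), ← hρdef]
        rw [hPhi] at hle
        have hgmin : ρ - ρ * Real.log ρ ≤ s t - ρ * Real.log (s t) := g_min hρpos hb.1
        linarith
end
end

section
/- The safe zone A := {(s₀,i₀) ∈ T : i^{s₀,i₀,0}(t) ≤ i_M for all t ∈ (0,∞)} (trajectories with zero control) equals the set {(s,i) ∈ T : 0 < i ≤ Φ₀(s)}, where Φ₀(s) = i_M for 0 < s < γ/β and Φ₀(s) = γ/β + i_M − s + (γ/β)·(log s − log(γ/β)) for s ≥ γ/β. -/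
open MeasureTheory Filter Set intervalIntegral
open scoped ENNReal

noncomputable section

open scoped Topology

namespace SIRAux

/-- The conserved-quantity curve through `(s₀, i₀)`. -/
noncomputable def F (b s₀ i₀ σ : ℝ) : ℝ := i₀ + s₀ - σ + b * (Real.log σ - Real.log s₀)

lemma hasDerivAt_F {b s₀ i₀ σ : ℝ} (hσ : σ ≠ 0) :
    HasDerivAt (F b s₀ i₀) (-1 + b / σ) σ := by
  have h1 : HasDerivAt (fun σ : ℝ => Real.log σ - Real.log s₀) σ⁻¹ σ :=
    (Real.hasDerivAt_log hσ).sub_const _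
  have h2 : HasDerivAt (fun σ : ℝ => i₀ + s₀ - σ) (-1) σ := by
    simpa using (hasDerivAt_id σ).const_sub (i₀ + s₀)
  have h3 := h2.add (h1.const_mul b)
  exact h3.congr_deriv (by rw [div_eq_mul_inv])

lemma F_s₀ (b s₀ i₀ : ℝ) : F b s₀ i₀ s₀ = i₀ := by simp [F]

/-- `F b s₀ i₀ σ ≤ i₀ + s₀ - b + b * (log b - log s₀)` for all `σ > 0` (peak bound). -/
lemma F_le_peak {b s₀ i₀ σ : ℝ} (hb : 0 < b) (hσ : 0 < σ) (hs₀ : 0 < s₀) :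
    F b s₀ i₀ σ ≤ i₀ + s₀ - b + b * (Real.log b - Real.log s₀) := by
  have h := Real.log_le_sub_one_of_pos (x := σ / b) (by positivity)
  rw [Real.log_div (ne_of_gt hσ) (ne_of_gt hb)] at h
  have h2 : b * (Real.log σ - Real.log b) ≤ σ - b := by
    have := mul_le_mul_of_nonneg_left h hb.le
    calc b * (Real.log σ - Real.log b) ≤ b * (σ / b - 1) := this
    _ = σ - b := by field_simp
  simp only [F]; nlinarith
  
/-- If `0 < σ ≤ s₀ ≤ b` then `F b s₀ i₀ σ ≤ i₀`. -/
lemma F_le_of_le {b s₀ i₀ σ : ℝ} (hσ : 0 < σ) (hσs : σ ≤ s₀) (hs₀b : s₀ ≤ b) (hs₀ : 0 < s₀) :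
    F b s₀ i₀ σ ≤ i₀ := by
  have hb : 0 < b := lt_of_lt_of_le hs₀ hs₀b
  have h := Real.log_le_sub_one_of_pos (x := σ / s₀) (by positivity)
  rw [Real.log_div (ne_of_gt hσ) (ne_of_gt hs₀)] at h
  -- log σ - log s₀ ≤ σ/s₀ - 1 = (σ - s₀)/s₀
  have h2 : b * (Real.log σ - Real.log s₀) ≤ b * ((σ - s₀) / s₀) := by
    apply mul_le_mul_of_nonneg_left _ hb.le
    calc Real.log σ - Real.log s₀ ≤ σ / s₀ - 1 := h
    _ = (σ - s₀) / s₀ := by field_simp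
  have h3 : b * ((σ - s₀) / s₀) ≤ σ - s₀ := by
    rw [mul_div_assoc']
    rw [div_le_iff₀ hs₀]
    nlinarith
  simp only [F]; linarith

end SIRAux

namespace SIRAux

theorem sir_exists {β γ s₀ i₀ : ℝ} (hβ : 0 < β) (hγ : 0 < γ) (hs₀ : 0 < s₀) (hi₀ : 0 < i₀) :
    ∃ s i : ℝ → ℝ, SIRSol β γ (fun _ => 0) s i s₀ i₀ ∧
      ∀ t, 0 ≤ t → 0 < s t ∧ s t ≤ s₀ ∧ i t = F (γ / β) s₀ i₀ (s t) := by
  set b : ℝ := γ / β with hbdef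
  have hb : 0 < b := div_pos hγ hβ
  have hbβ : b * β = γ := div_mul_cancel₀ γ (ne_of_gt hβ)
  -- the zero of F below s₀
  set c : ℝ := min (s₀ / 2) (s₀ * Real.exp (-((i₀ + s₀) / b))) with hcdef
  have hc0 : 0 < c := lt_min (by positivity) (by positivity)
  have hcs : c < s₀ := lt_of_le_of_lt (min_le_left _ _) (by linarith)
  have hFc : F b s₀ i₀ c ≤ -c := by
    have h1 : Real.log c ≤ Real.log (s₀ * Real.exp (-((i₀ + s₀) / b))) :=
      Real.log_le_log hc0 (min_le_right _ _)
    rw [Real.log_mul (ne_of_gt hs₀) (Real.exp_ne_zero _), Real.log_exp] at h1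
    have h2 : b * (Real.log c - Real.log s₀) ≤ b * (-((i₀ + s₀) / b)) :=
      mul_le_mul_of_nonneg_left (by linarith) hb.le
    have h3 : b * (-((i₀ + s₀) / b)) = -(i₀ + s₀) := by field_simp
    simp only [F]; linarith
  set S : Set ℝ := {σ | σ ∈ Icc c s₀ ∧ F b s₀ i₀ σ ≤ 0} with hSdef
  have hSne : c ∈ S := ⟨⟨le_refl c, hcs.le⟩, by linarith⟩
  have hSbdd : BddAbove S := ⟨s₀, fun σ hσ => hσ.1.2⟩
  have hFcont : ∀ σ : ℝ, σ ≠ 0 → ContinuousAt (F b s₀ i₀) σ := fun σ hσ =>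
    (hasDerivAt_F hσ).continuousAt
  have hSclosed : IsClosed S := by
    have heq : S = Icc c s₀ ∩ (fun σ => F b s₀ i₀ (max σ c)) ⁻¹' (Iic 0) := by
      ext σ
      constructor
      · rintro ⟨h1, h2⟩
        exact ⟨h1, by simpa [max_eq_left h1.1] using h2⟩
      · rintro ⟨h1, h2⟩
        exact ⟨h1, by simpa [max_eq_left h1.1] using h2⟩
    rw [heq]
    have hcont : Continuous fun σ => F b s₀ i₀ (max σ c) := by
      rw [continuous_iff_continuousAt]
      intro σ
      have hmax : ContinuousAt (fun σ : ℝ => max σ c) σ :=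
        (continuous_id.max continuous_const).continuousAt
      have hcc : ContinuousAt (F b s₀ i₀ ∘ fun σ : ℝ => max σ c) σ :=
        ContinuousAt.comp (hFcont _ (ne_of_gt (lt_of_lt_of_le hc0 (le_max_right _ _)))) hmax
      exact hcc
    exact isClosed_Icc.inter (IsClosed.preimage hcont isClosed_Iic)
  set σs : ℝ := sSup S with hσsdef
  have hσsS : σs ∈ S := hSclosed.csSup_mem ⟨c, hSne⟩ hSbdd
  have hσs_pos : 0 < σs := lt_of_lt_of_le hc0 hσsS.1.1
  have hσs_le : σs ≤ s₀ := hσsS.1.2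
  have hσs_lt : σs < s₀ := by
    rcases lt_or_eq_of_le hσs_le with h | h
    · exact h
    · exfalso; have := hσsS.2; rw [h, F_s₀] at this; linarith
  have hFpos : ∀ σ ∈ Ioc σs s₀, 0 < F b s₀ i₀ σ := by
    intro σ hσ
    by_contra h
    push_neg at h
    have hmem : σ ∈ S := ⟨⟨le_trans hσsS.1.1 hσ.1.le, hσ.2⟩, h⟩
    exact absurd (le_csSup hSbdd hmem) (not_le.2 hσ.1)
  have hFσs : F b s₀ i₀ σs = 0 := by
    refine le_antisymm hσsS.2 ?_
    have htend : Tendsto (F b s₀ i₀) (𝓝[>] σs) (𝓝 (F b s₀ i₀ σs)) :=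
      (hFcont σs (ne_of_gt hσs_pos)).continuousWithinAt.tendsto
    refine ge_of_tendsto htend ?_
    filter_upwards [Ioc_mem_nhdsGT_of_mem ⟨le_refl _, hσs_lt⟩] with σ hσ
    exact (hFpos σ hσ).le
  -- Lipschitz-type upper bound for F near its zero
  set M : ℝ := 1 + b / σs with hMdef
  have hM0 : 0 < M := by positivity
  have hM : ∀ σ ∈ Icc σs s₀, F b s₀ i₀ σ ≤ M * (σ - σs) := by
    intro σ hσ
    have hder : ∀ x ∈ Icc σs s₀, HasDerivWithinAt (F b s₀ i₀) (-1 + b / x) (Icc σs s₀) x :=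
      fun x hx => (hasDerivAt_F (ne_of_gt (lt_of_lt_of_le hσs_pos hx.1))).hasDerivWithinAt
    have hbound : ∀ x ∈ Icc σs s₀, ‖-1 + b / x‖ ≤ M := by
      intro x hx
      have hx0 : 0 < x := lt_of_lt_of_le hσs_pos hx.1
      have h1 : b / x ≤ b / σs := div_le_div_of_nonneg_left hb.le hσs_pos hx.1
      have h2 : 0 ≤ b / x := by positivity
      rw [Real.norm_eq_abs, abs_le]
      constructor <;> [linarith; linarith]
    have := Convex.norm_image_sub_le_of_norm_hasDerivWithin_le hder hbound (convex_Icc _ _)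
      (left_mem_Icc.2 hσs_le) hσ
    rw [hFσs, sub_zero, Real.norm_eq_abs, Real.norm_eq_abs,
      abs_of_nonneg (by linarith [hσ.1] : (0:ℝ) ≤ σ - σs)] at this
    exact (le_abs_self _).trans this
  -- the time map G
  set φ : ℝ → ℝ := fun r => (β * r * F b s₀ i₀ r)⁻¹ with hφdef
  have hprodpos : ∀ r ∈ Ioc σs s₀, 0 < β * r * F b s₀ i₀ r := fun r hr =>
    mul_pos (mul_pos hβ (lt_of_lt_of_le hσs_pos hr.1.le)) (hFpos r hr)
  have hφpos : ∀ r ∈ Ioc σs s₀, 0 < φ r := fun r hr => inv_pos.2 (hprodpos r hr)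
  have hφcontAt : ∀ r ∈ Ioc σs s₀, ContinuousAt φ r := by
    intro r hr
    exact ((continuous_const.continuousAt.mul continuousAt_id).mul
      (hFcont r (ne_of_gt (lt_of_lt_of_le hσs_pos hr.1.le)))).inv₀ (ne_of_gt (hprodpos r hr))
  have hφint : ∀ a' b' : ℝ, σs < a' → a' ≤ b' → b' ≤ s₀ → IntervalIntegrable φ volume a' b' := by
    intro a' b' h1 h2 h3
    apply ContinuousOn.intervalIntegrable
    intro r hr
    rw [uIcc_of_le h2] at hr
    exact (hφcontAt r ⟨lt_of_lt_of_le h1 hr.1, le_trans hr.2 h3⟩).continuousWithinAt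
  set G : ℝ → ℝ := fun σ => ∫ r in σ..s₀, φ r with hGdef
  have hG0 : G s₀ = 0 := intervalIntegral.integral_same
  have hGadd : ∀ σ₁ σ₂ : ℝ, σs < σ₁ → σ₁ ≤ σ₂ → σ₂ ≤ s₀ →
      G σ₁ = (∫ r in σ₁..σ₂, φ r) + G σ₂ := by
    intro σ₁ σ₂ h1 h2 h3
    exact (intervalIntegral.integral_add_adjacent_intervals (hφint σ₁ σ₂ h1 h2 h3)
      (hφint σ₂ s₀ (lt_of_lt_of_le h1 h2) h3 le_rfl)).symm
  have hGanti : StrictAntiOn G (Ioc σs s₀) := by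
    intro σ₁ h1 σ₂ h2 hlt
    have hpos : 0 < ∫ r in σ₁..σ₂, φ r := by
      apply intervalIntegral_pos_of_pos_on (hφint σ₁ σ₂ h1.1 hlt.le h2.2)
      · intro x hx
        exact hφpos x ⟨lt_trans h1.1 hx.1, le_trans hx.2.le h2.2⟩
      · exact hlt
    rw [hGadd σ₁ σ₂ h1.1 hlt.le h2.2]
    linarith
  have hGnonneg : ∀ σ ∈ Ioc σs s₀, 0 ≤ G σ := by
    intro σ hσ
    rcases lt_or_eq_of_le hσ.2 with h | h
    · have := hGanti hσ ⟨hσs_lt, le_rfl⟩ h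
      rw [hG0] at this
      linarith
    · rw [h, hG0]
  have hGcontOn : ∀ σ₁ : ℝ, σs < σ₁ → σ₁ ≤ s₀ → ContinuousOn G (Icc σ₁ s₀) := by
    intro σ₁ h1 h2
    have hint : IntegrableOn φ (uIcc σ₁ s₀) volume := by
      rw [uIcc_of_le h2]
      exact (intervalIntegrable_iff_integrableOn_Icc_of_le h2).1 (hφint σ₁ s₀ h1 h2 le_rfl)
    have := intervalIntegral.continuousOn_primitive_interval_left hint
    rwa [uIcc_of_le h2] at this
  have hGderiv : ∀ σ ∈ Ioo σs s₀, HasDerivAt G (-(φ σ)) σ := by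
    intro σ hσ
    have hmeas : StronglyMeasurableAtFilter φ (𝓝 σ) volume := by
      refine ContinuousAt.stronglyMeasurableAtFilter isOpen_Ioo ?_ σ hσ
      intro x hx
      exact hφcontAt x ⟨hx.1, hx.2.le⟩
    exact intervalIntegral.integral_hasDerivAt_left (hφint σ s₀ hσ.1 hσ.2.le le_rfl)
      hmeas (hφcontAt σ ⟨hσ.1, hσ.2.le⟩)
  -- divergence of G near σs
  have hGbig : ∀ T : ℝ, ∃ σ : ℝ, σs < σ ∧ σ < s₀ ∧ T ≤ G σ := by
    intro T
    set K : ℝ := β * s₀ * M with hKdef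
    have hK : 0 < K := by positivity
    set δ : ℝ := min ((s₀ - σs) / 2) ((s₀ - σs) * Real.exp (-(T * K))) with hδdef
    have hδ0 : 0 < δ := lt_min (by linarith) (mul_pos (by linarith) (Real.exp_pos _))
    set σ : ℝ := σs + δ with hσdef
    have hσ1 : σs < σ := by linarith
    have hσ2 : σ < s₀ := by
      have := min_le_left ((s₀ - σs) / 2) ((s₀ - σs) * Real.exp (-(T * K)))
      simp only [hσdef]; linarith
    set ψ : ℝ → ℝ := fun r => K⁻¹ * (r - σs)⁻¹ with hψdef
    have hψle : ∀ r ∈ Icc σ s₀, ψ r ≤ φ r := by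
      intro r hr
      have hrσs : σs < r := lt_of_lt_of_le hσ1 hr.1
      have hr0 : 0 < r := lt_trans hσs_pos hrσs
      have hFr : 0 < F b s₀ i₀ r := hFpos r ⟨hrσs, hr.2⟩
      have h2 : β * r * F b s₀ i₀ r ≤ K * (r - σs) := by
        have ha : β * r ≤ β * s₀ := mul_le_mul_of_nonneg_left hr.2 hβ.le
        have hc2 : F b s₀ i₀ r ≤ M * (r - σs) := hM r ⟨hrσs.le, hr.2⟩
        calc β * r * F b s₀ i₀ r ≤ β * s₀ * F b s₀ i₀ r :=
              mul_le_mul_of_nonneg_right ha hFr.le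
          _ ≤ β * s₀ * (M * (r - σs)) := mul_le_mul_of_nonneg_left hc2 (by positivity)
          _ = K * (r - σs) := by ring
      have h3 : (K * (r - σs))⁻¹ ≤ (β * r * F b s₀ i₀ r)⁻¹ :=
        inv_anti₀ (hprodpos r ⟨hrσs, hr.2⟩) h2
      calc ψ r = (K * (r - σs))⁻¹ := by rw [mul_inv]
        _ ≤ φ r := h3
    have hψcont : ContinuousOn ψ (Icc σ s₀) := by
      apply ContinuousOn.mul continuousOn_const
      apply ContinuousOn.inv₀ ((continuousOn_id.sub continuousOn_const))
      intro r hr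
      have : σs < r := lt_of_lt_of_le hσ1 hr.1
      exact sub_ne_zero.2 (ne_of_gt this)
    have hψint : IntervalIntegrable ψ volume σ s₀ := by
      apply ContinuousOn.intervalIntegrable
      rwa [uIcc_of_le hσ2.le]
    have hψval : ∫ r in σ..s₀, ψ r = K⁻¹ * (Real.log (s₀ - σs) - Real.log (σ - σs)) := by
      have hder : ∀ r ∈ uIcc σ s₀, HasDerivAt (fun r => K⁻¹ * Real.log (r - σs)) (ψ r) r := by
        intro r hr
        rw [uIcc_of_le hσ2.le] at hr
        have hrσs : σs < r := lt_of_lt_of_le hσ1 hr.1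
        have h1 : HasDerivAt (fun r : ℝ => r - σs) 1 r := (hasDerivAt_id r).sub_const _
        have h2 := (Real.hasDerivAt_log (sub_ne_zero.2 (ne_of_gt hrσs))).comp r h1
        have h3 := h2.const_mul K⁻¹
        simpa [hψdef, Function.comp] using h3
      rw [intervalIntegral.integral_eq_sub_of_hasDerivAt hder hψint]
      ring
    have hlogδ : Real.log δ ≤ Real.log (s₀ - σs) - T * K := by
      have h1 : Real.log δ ≤ Real.log ((s₀ - σs) * Real.exp (-(T * K))) :=
        Real.log_le_log hδ0 (min_le_right _ _)
      rw [Real.log_mul (by linarith : s₀ - σs ≠ 0) (Real.exp_ne_zero _), Real.log_exp] at h1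
      linarith
    have hTψ : T ≤ ∫ r in σ..s₀, ψ r := by
      rw [hψval]
      have hσσs : σ - σs = δ := by simp [hσdef]
      rw [hσσs]
      have h2 : T * K ≤ Real.log (s₀ - σs) - Real.log δ := by linarith
      have h3 := mul_le_mul_of_nonneg_left h2 (inv_pos.2 hK).le
      calc T = K⁻¹ * (T * K) := by field_simp
        _ ≤ K⁻¹ * (Real.log (s₀ - σs) - Real.log δ) := h3
    refine ⟨σ, hσ1, hσ2, le_trans hTψ ?_⟩
    exact intervalIntegral.integral_mono_on hσ2.le hψint (hφint σ s₀ hσ1 hσ2.le le_rfl) hψle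
  -- surjectivity of G onto [0, ∞)
  have hsurj : ∀ t : ℝ, 0 ≤ t → ∃ σ : ℝ, σ ∈ Ioc σs s₀ ∧ G σ = t := by
    intro t ht
    obtain ⟨σ₁, h1, h2, h3⟩ := hGbig t
    have hcont := hGcontOn σ₁ h1 h2.le
    have hsub := intermediate_value_Icc' h2.le hcont
    have hmem : t ∈ Icc (G s₀) (G σ₁) := ⟨by rw [hG0]; exact ht, h3⟩
    obtain ⟨σ, hσmem, hGσ⟩ := hsub hmem
    exact ⟨σ, ⟨lt_of_lt_of_le h1 hσmem.1, hσmem.2⟩, hGσ⟩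
  have hGinj : ∀ σ₁ ∈ Ioc σs s₀, ∀ σ₂ ∈ Ioc σs s₀, G σ₁ = G σ₂ → σ₁ = σ₂ := by
    intro σ₁ h1 σ₂ h2 heq
    rcases lt_trichotomy σ₁ σ₂ with h | h | h
    · exact absurd heq (ne_of_gt (hGanti h1 h2 h))
    · exact h
    · exact absurd heq (ne_of_lt (hGanti h2 h1 h))
  classical
  set sf : ℝ → ℝ := fun t => if h : 0 ≤ t then (hsurj t h).choose else s₀ with hsfdef
  have hsfmem : ∀ t : ℝ, 0 ≤ t → sf t ∈ Ioc σs s₀ := by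
    intro t ht
    simp only [hsfdef, dif_pos ht]
    exact (hsurj t ht).choose_spec.1
  have hsfG : ∀ t : ℝ, 0 ≤ t → G (sf t) = t := by
    intro t ht
    simp only [hsfdef, dif_pos ht]
    exact (hsurj t ht).choose_spec.2
  have hs₀Ioc : s₀ ∈ Ioc σs s₀ := ⟨hσs_lt, le_rfl⟩
  have hsf0 : sf 0 = s₀ := by
    apply hGinj _ (hsfmem 0 le_rfl) _ hs₀Ioc
    rw [hsfG 0 le_rfl, hG0]
  have hsfneg : ∀ t : ℝ, t < 0 → sf t = s₀ := by
    intro t ht; simp only [hsfdef, dif_neg (not_le.2 ht)]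
  have hsfpos : ∀ t : ℝ, 0 < sf t := by
    intro t
    rcases le_or_gt 0 t with h | h
    · exact lt_trans hσs_pos (hsfmem t h).1
    · rw [hsfneg t h]; exact hs₀
  have hsf_lt : ∀ t : ℝ, 0 < t → sf t < s₀ := by
    intro t ht
    rcases lt_or_eq_of_le (hsfmem t ht.le).2 with h | h
    · exact h
    · exfalso
      have := hsfG t ht.le
      rw [h, hG0] at this
      linarith
  have hsf_surj : ∀ σ ∈ Ioc σs s₀, ∃ t : ℝ, 0 ≤ t ∧ sf t = σ := by
    intro σ hσ
    refine ⟨G σ, hGnonneg σ hσ, ?_⟩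
    exact hGinj _ (hsfmem _ (hGnonneg σ hσ)) _ hσ (hsfG _ (hGnonneg σ hσ))
  have hanti : StrictAntiOn sf (Ici 0) := by
    intro t₁ h1 t₂ h2 hlt
    have e1 := hsfG t₁ h1
    have e2 := hsfG t₂ h2
    by_contra hcon
    push_neg at hcon
    rcases lt_or_eq_of_le hcon with h | h
    · have := hGanti (hsfmem t₁ h1) (hsfmem t₂ h2) h
      rw [e1, e2] at this
      linarith
    · rw [← h] at e2; rw [e1] at e2; linarith
  -- continuity of sf
  set g : ℝ → ℝ := fun t => -sf t with hgdef
  have hgmono : StrictMonoOn g (Ici 0) := by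
    intro t₁ h1 t₂ h2 hlt
    simp only [hgdef, neg_lt_neg_iff]
    exact hanti h1 h2 hlt
  have himg : g '' (Ici 0) = Ico (-s₀) (-σs) := by
    ext y
    constructor
    · rintro ⟨t, ht, rfl⟩
      have := hsfmem t ht
      exact ⟨by simp only [hgdef]; linarith [this.2], by simp only [hgdef]; linarith [this.1]⟩
    · rintro ⟨h1, h2⟩
      have hmem : -y ∈ Ioc σs s₀ := ⟨by linarith, by linarith⟩
      obtain ⟨t, ht0, hsft⟩ := hsf_surj _ hmem
      exact ⟨t, ht0, by simp only [hgdef, hsft]; ring⟩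
  have hsf_eq_neg_g : sf = fun t => -g t := by funext t; simp [hgdef]
  have hcontAt : ∀ t : ℝ, 0 < t → ContinuousAt sf t := by
    intro t ht
    have hg0 : -s₀ < g t := by
      simp only [hgdef, neg_lt_neg_iff]
      exact hsf_lt t ht
    have hg1 : g t < -σs := by
      simp only [hgdef]
      have := (hsfmem t ht.le).1
      linarith
    have h1 : ContinuousAt g t := by
      apply hgmono.continuousAt_of_image_mem_nhds (Ici_mem_nhds ht)
      rw [himg]
      exact mem_of_superset (Ioo_mem_nhds hg0 hg1) Ioo_subset_Ico_self
    rw [hsf_eq_neg_g]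
    exact h1.neg
  have hcont0 : ContinuousWithinAt sf (Ici 0) 0 := by
    have hg00 : g 0 = -s₀ := by simp only [hgdef, hsf0]
    have h1 : ContinuousWithinAt g (Ici 0) 0 := by
      apply hgmono.continuousWithinAt_right_of_exists_between self_mem_nhdsWithin
      intro y hy
      rw [hg00] at hy
      set z : ℝ := min y (-((s₀ + σs) / 2)) with hzdef
      have hz1 : -s₀ < z := lt_min hy (by linarith)
      have hz2 : z < -σs := lt_of_le_of_lt (min_le_right _ _) (by linarith)
      have hmem : -z ∈ Ioc σs s₀ := ⟨by linarith, by linarith⟩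
      obtain ⟨t, ht0, hsft⟩ := hsf_surj _ hmem
      refine ⟨t, ht0, ?_⟩
      have hgt : g t = z := by simp only [hgdef, hsft]; ring
      rw [hgt, hg00]
      exact ⟨hz1, min_le_left _ _⟩
    rw [hsf_eq_neg_g]
    exact h1.neg
  have hsfcontOn : ContinuousOn sf (Ici 0) := by
    intro t ht
    rcases lt_or_eq_of_le (mem_Ici.1 ht) with h | h
    · exact (hcontAt t h).continuousWithinAt
    · rw [← h]; exact hcont0
  have hsfcont : Continuous sf := by
    have heq : sf = fun t => sf (max t 0) := by
      funext t
      rcases le_or_gt 0 t with h | h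
      · rw [max_eq_left h]
      · rw [max_eq_right h.le, hsf0, hsfneg t h]
    rw [heq]
    exact hsfcontOn.comp_continuous (continuous_id.max continuous_const)
      (fun t => mem_Ici.2 (le_max_right _ _))
  -- the infected function
  have hFsf_cont : Continuous fun t => F b s₀ i₀ (sf t) := by
    rw [continuous_iff_continuousAt]
    intro t
    exact (hFcont _ (ne_of_gt (hsfpos t))).comp hsfcont.continuousAt
  -- derivative of sf
  have hsf_deriv : ∀ t : ℝ, 0 < t →
      HasDerivAt sf (-(β * sf t * F b s₀ i₀ (sf t))) t := by
    intro t ht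
    have hmem := hsfmem t ht.le
    have hIoo : sf t ∈ Ioo σs s₀ := ⟨hmem.1, hsf_lt t ht⟩
    have hGd := hGderiv _ hIoo
    have hprod : 0 < β * sf t * F b s₀ i₀ (sf t) := hprodpos _ hmem
    have hne : -(φ (sf t)) ≠ 0 := by
      simp only [hφdef, neg_ne_zero]
      exact inv_ne_zero (ne_of_gt hprod)
    have hfg : ∀ᶠ y in 𝓝 t, G (sf y) = y := by
      filter_upwards [Ioi_mem_nhds ht] with y hy
      exact hsfG y (le_of_lt hy)
    have hd := HasDerivAt.of_local_left_inverse (hcontAt t ht) hGd hne hfg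
    refine hd.congr_deriv ?_
    simp only [hφdef]
    rw [inv_neg, inv_inv]
  have hif_deriv : ∀ t : ℝ, 0 < t →
      HasDerivAt (fun t => F b s₀ i₀ (sf t))
        (β * sf t * F b s₀ i₀ (sf t) - γ * F b s₀ i₀ (sf t)) t := by
    intro t ht
    have hσ0 : sf t ≠ 0 := ne_of_gt (hsfpos t)
    have h1 := (hasDerivAt_F (b := b) (s₀ := s₀) (i₀ := i₀) hσ0).comp t (hsf_deriv t ht)
    refine h1.congr_deriv ?_
    rw [← hbβ]
    field_simp
    ring
  -- integral identities
  have hsid : ∀ t : ℝ, 0 ≤ t →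
      sf t = s₀ + ∫ τ in (0:ℝ)..t, -(β * sf τ * F b s₀ i₀ (sf τ)) := by
    intro t ht
    have hintg : Continuous fun τ => -(β * sf τ * F b s₀ i₀ (sf τ)) :=
      ((continuous_const.mul hsfcont).mul hFsf_cont).neg
    have h := intervalIntegral.integral_eq_sub_of_hasDeriv_right_of_le ht
      hsfcont.continuousOn
      (fun x hx => (hsf_deriv x hx.1).hasDerivWithinAt)
      (hintg.intervalIntegrable 0 t)
    rw [h, hsf0]
    ring
  have hiid : ∀ t : ℝ, 0 ≤ t →
      F b s₀ i₀ (sf t) = i₀ + ∫ τ in (0:ℝ)..t,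
        (β * sf τ * F b s₀ i₀ (sf τ) - γ * F b s₀ i₀ (sf τ)) := by
    intro t ht
    have hintg : Continuous fun τ =>
        β * sf τ * F b s₀ i₀ (sf τ) - γ * F b s₀ i₀ (sf τ) :=
      ((continuous_const.mul hsfcont).mul hFsf_cont).sub (continuous_const.mul hFsf_cont)
    have h := intervalIntegral.integral_eq_sub_of_hasDeriv_right_of_le ht
      hFsf_cont.continuousOn
      (fun x hx => (hif_deriv x hx.1).hasDerivWithinAt)
      (hintg.intervalIntegrable 0 t)
    rw [h, hsf0, F_s₀]
    ring
  refine ⟨sf, fun t => F b s₀ i₀ (sf t), ⟨hsfcont, hFsf_cont, ?_, ?_⟩, ?_⟩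
  · intro t ht
    have := hsid t ht
    simpa using this
  · intro t ht
    have := hiid t ht
    simpa using this
  · intro t ht
    exact ⟨hsfpos t, (hsfmem t ht).2, rfl⟩

end SIRAux

namespace SIRAux

theorem sir_bound {β γ iM : ℝ} (hβ : 0 < β) (hγ : 0 < γ) {s₀ i₀ : ℝ}
    (hs₀ : 0 < s₀) (hi₀ : 0 < i₀) {s i : ℝ → ℝ}
    (hsol : SIRSol β γ (fun _ => 0) s i s₀ i₀) (hadm : ∀ t : ℝ, 0 ≤ t → i t ≤ iM) :
    i₀ ≤ Phi0 β γ iM s₀ := by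
  set b : ℝ := γ / β with hbdef
  have hb : 0 < b := div_pos hγ hβ
  have hbβ : b * β = γ := div_mul_cancel₀ γ (ne_of_gt hβ)
  obtain ⟨hscont, hicont, hsint₀, hiint₀⟩ := hsol
  have hsint : ∀ t : ℝ, 0 ≤ t → s t = s₀ + ∫ τ in (0:ℝ)..t, -(β * s τ * i τ) := by
    intro t ht; have := hsint₀ t ht; simpa using this
  have hiint : ∀ t : ℝ, 0 ≤ t → i t = i₀ + ∫ τ in (0:ℝ)..t, (β * s τ * i τ - γ * i τ) := by
    intro t ht; have := hiint₀ t ht; simpa using this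
  have hs0 : s 0 = s₀ := by have := hsint 0 le_rfl; simpa using this
  have hi0 : i 0 = i₀ := by have := hiint 0 le_rfl; simpa using this
  have cS : Continuous fun τ => -(β * s τ * i τ) :=
    ((continuous_const.mul hscont).mul hicont).neg
  have cI : Continuous fun τ => β * s τ * i τ - γ * i τ :=
    ((continuous_const.mul hscont).mul hicont).sub (continuous_const.mul hicont)
  have hsDW : ∀ t : ℝ, 0 ≤ t → HasDerivWithinAt s (-(β * s t * i t)) (Ici t) t := by
    intro t ht
    have hd : HasDerivAt (fun t => s₀ + ∫ τ in (0:ℝ)..t, -(β * s τ * i τ))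
        (-(β * s t * i t)) t := ((cS.integral_hasStrictDerivAt 0 t).hasDerivAt).const_add s₀
    refine (hd.hasDerivWithinAt).congr ?_ ?_
    · intro y hy; exact hsint y (le_trans ht hy)
    · exact hsint t ht
  have hiDW : ∀ t : ℝ, 0 ≤ t → HasDerivWithinAt i (β * s t * i t - γ * i t) (Ici t) t := by
    intro t ht
    have hd : HasDerivAt (fun t => i₀ + ∫ τ in (0:ℝ)..t, (β * s τ * i τ - γ * i τ))
        (β * s t * i t - γ * i t) t := ((cI.integral_hasStrictDerivAt 0 t).hasDerivAt).const_add i₀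
    refine (hd.hasDerivWithinAt).congr ?_ ?_
    · intro y hy; exact hiint y (le_trans ht hy)
    · exact hiint t ht
  -- positivity of s
  have hspos : ∀ T : ℝ, 0 ≤ T → 0 < s T := by
    intro T hT
    set E : ℝ → ℝ := fun t => ∫ τ in (0:ℝ)..t, i τ with hEdef
    have hE : ∀ t : ℝ, HasDerivAt E (i t) t := fun t =>
      (hicont.integral_hasStrictDerivAt 0 t).hasDerivAt
    have hEcont : Continuous E := by
      rw [continuous_iff_continuousAt]; exact fun t => (hE t).continuousAt
    set h1f : ℝ → ℝ := fun t => s t * Real.exp (β * E t) with h1fdef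
    have hcont1 : ContinuousOn h1f (Icc 0 T) :=
      (hscont.mul (Real.continuous_exp.comp (continuous_const.mul hEcont))).continuousOn
    have hder1 : ∀ x ∈ Ico (0:ℝ) T, HasDerivWithinAt h1f 0 (Ici x) x := by
      intro x hx
      have hd2 : HasDerivWithinAt (fun t => Real.exp (β * E t))
          (Real.exp (β * E x) * (β * i x)) (Ici x) x :=
        (((hE x).const_mul β).hasDerivWithinAt).exp
      have := (hsDW x hx.1).mul hd2
      refine this.congr_deriv ?_
      ring
    have hconst := constant_of_has_deriv_right_zero hcont1 hder1 T (right_mem_Icc.2 hT)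
    have hE0 : E 0 = 0 := intervalIntegral.integral_same
    have h10 : h1f 0 = s₀ := by simp [h1fdef, hE0, hs0]
    rw [h10] at hconst
    have he := Real.exp_pos (β * E T)
    have : s T * Real.exp (β * E T) = s₀ := hconst
    nlinarith
  -- formula for i
  set D : ℝ → ℝ := fun t => ∫ τ in (0:ℝ)..t, (β * s τ - γ) with hDdef
  have hDc : Continuous fun τ => β * s τ - γ := (continuous_const.mul hscont).sub continuous_const
  have hD : ∀ t : ℝ, HasDerivAt D (β * s t - γ) t := fun t =>
    (hDc.integral_hasStrictDerivAt 0 t).hasDerivAt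
  have hDcont : Continuous D := by
    rw [continuous_iff_continuousAt]; exact fun t => (hD t).continuousAt
  have hif : ∀ T : ℝ, 0 ≤ T → i T = i₀ * Real.exp (D T) := by
    intro T hT
    set h2f : ℝ → ℝ := fun t => i t * Real.exp (-D t) with h2fdef
    have hcont2 : ContinuousOn h2f (Icc 0 T) :=
      (hicont.mul (Real.continuous_exp.comp hDcont.neg)).continuousOn
    have hder2 : ∀ x ∈ Ico (0:ℝ) T, HasDerivWithinAt h2f 0 (Ici x) x := by
      intro x hx
      have hd2 : HasDerivWithinAt (fun t => Real.exp (-D t))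
          (Real.exp (-D x) * (-(β * s x - γ))) (Ici x) x :=
        (((hD x).neg).hasDerivWithinAt).exp
      have := (hiDW x hx.1).mul hd2
      refine this.congr_deriv ?_
      ring
    have hconst := constant_of_has_deriv_right_zero hcont2 hder2 T (right_mem_Icc.2 hT)
    have hD0 : D 0 = 0 := intervalIntegral.integral_same
    have h20 : h2f 0 = i₀ := by simp [h2fdef, hD0, hi0]
    rw [h20] at hconst
    have hmul : Real.exp (-D T) * Real.exp (D T) = 1 := by
      rw [← Real.exp_add]; simp
    have hconst' : i T * Real.exp (-D T) = i₀ := by simpa [h2fdef] using hconst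
    calc i T = i T * (Real.exp (-D T) * Real.exp (D T)) := by rw [hmul, mul_one]
      _ = i T * Real.exp (-D T) * Real.exp (D T) := by ring
      _ = i₀ * Real.exp (D T) := by rw [hconst']
  -- conservation of W
  have hW : ∀ T : ℝ, 0 ≤ T →
      s T + i T - b * Real.log (s T) = s₀ + i₀ - b * Real.log s₀ := by
    intro T hT
    set Wf : ℝ → ℝ := fun t => s t + i t - b * Real.log (s t) with hWfdef
    have hcontW : ContinuousOn Wf (Icc 0 T) := by
      refine ((hscont.continuousOn.add hicont.continuousOn).sub
        (continuousOn_const.mul (ContinuousOn.log hscont.continuousOn ?_)))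
      intro x hx
      exact ne_of_gt (hspos x hx.1)
    have hderW : ∀ x ∈ Ico (0:ℝ) T, HasDerivWithinAt Wf 0 (Ici x) x := by
      intro x hx
      have hsx : s x ≠ 0 := ne_of_gt (hspos x hx.1)
      have hlog : HasDerivWithinAt (fun t => Real.log (s t))
          ((s x)⁻¹ * (-(β * s x * i x))) (Ici x) x :=
        (Real.hasDerivAt_log hsx).comp_hasDerivWithinAt x (hsDW x hx.1)
      have := ((hsDW x hx.1).add (hiDW x hx.1)).sub (hlog.const_mul b)
      refine this.congr_deriv ?_
      rw [← hbβ]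
      field_simp
      ring
    have hconst := constant_of_has_deriv_right_zero hcontW hderW T (right_mem_Icc.2 hT)
    have hW0 : Wf 0 = s₀ + i₀ - b * Real.log s₀ := by simp [hWfdef, hs0, hi0]
    rw [hW0] at hconst
    exact hconst
  rcases lt_or_ge s₀ b with hcase | hcase
  · -- s₀ < γ/β : trivial case
    have hPhi : Phi0 β γ iM s₀ = iM := if_pos hcase
    rw [hPhi, ← hi0]
    exact hadm 0 le_rfl
  · -- b ≤ s₀ : crossing argument
    have hcross : ∃ t : ℝ, 0 ≤ t ∧ s t = b := by
      by_contra hno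
      push_neg at hno
      have hgt : ∀ t : ℝ, 0 ≤ t → b < s t := by
        intro t ht
        rcases lt_or_ge b (s t) with h | h
        · exact h
        · exfalso
          have hne := hno t ht
          have hlt : s t < b := lt_of_le_of_ne h hne
          have hs0gt : b < s 0 := by
            rw [hs0]; exact lt_of_le_of_ne hcase (fun h' => hno 0 le_rfl (by rw [hs0, ← h']))
          have ht0 : 0 < t := by
            by_contra h'
            push_neg at h'
            have : t = 0 := le_antisymm h' ht
            rw [this] at hlt
            linarith
          have hsub := intermediate_value_Icc' ht0.le (hscont.continuousOn (s := Icc 0 t))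
          have hmem : b ∈ Icc (s t) (s 0) := ⟨hlt.le, by rw [hs0]; linarith⟩
          obtain ⟨τ, hτmem, hsτ⟩ := hsub hmem
          exact hno τ hτmem.1 hsτ
      have hige : ∀ t : ℝ, 0 ≤ t → i₀ ≤ i t := by
        intro t ht
        rw [hif t ht]
        have hDnn : 0 ≤ D t := by
          apply intervalIntegral.integral_nonneg ht
          intro u hu
          have h1 := hgt u hu.1
          have h2 : γ < s u * β := by
            rw [hbdef] at h1
            exact (div_lt_iff₀ hβ).1 h1
          linarith
        nlinarith [Real.one_le_exp hDnn]
      have hsle : ∀ t : ℝ, 0 ≤ t → s t ≤ s₀ + t * (-(γ * i₀)) := by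
        intro t ht
        have hmono : (∫ τ in (0:ℝ)..t, -(β * s τ * i τ)) ≤ ∫ τ in (0:ℝ)..t, -(γ * i₀) := by
          apply intervalIntegral.integral_mono_on ht (cS.intervalIntegrable 0 t)
            (intervalIntegrable_const)
          intro τ hτ
          have h1 := hgt τ hτ.1
          have h2 := hige τ hτ.1
          rw [← hbβ]
          have h3 : b * i₀ ≤ s τ * i τ :=
            mul_le_mul h1.le h2 hi₀.le (le_trans hb.le h1.le)
          nlinarith [mul_le_mul_of_nonneg_left h3 hβ.le]
        have := hsint t ht
        rw [this]
        have hconst : (∫ τ in (0:ℝ)..t, -(γ * i₀)) = t * (-(γ * i₀)) := by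
          simp; ring
        rw [hconst] at hmono
        linarith
      set t₀ : ℝ := (s₀ - b + 1) / (γ * i₀) with ht₀def
      have ht₀pos : 0 < t₀ := by
        apply div_pos (by linarith) (by positivity)
      have hval : t₀ * (γ * i₀) = s₀ - b + 1 := by
        rw [ht₀def]; field_simp
      have h1 := hsle t₀ ht₀pos.le
      have h2 := hgt t₀ ht₀pos.le
      nlinarith
    obtain ⟨ts, hts, hsts⟩ := hcross
    have hWt := hW ts hts
    rw [hsts] at hWt
    have hits := hadm ts hts
    have hPhi : Phi0 β γ iM s₀ = b + iM - s₀ + b * (Real.log s₀ - Real.log b) :=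
      if_neg (not_lt.2 hcase)
    rw [hPhi]
    have e1 := mul_sub b (Real.log s₀) (Real.log b)
    linarith

end SIRAux

/-- Characterization of the safe zone: `A = {(s,i) ∈ T : 0 < i ≤ Φ₀(s)}`. -/
theorem statement8 (β γ umax iM : ℝ) (hβ : 0 < β) (hγ : 0 < γ)
    (humax : 0 < umax) (humaxβ : umax < β) (hiM : iM ∈ Set.Ioo (0:ℝ) 1) :
    SafeZone β γ iM
      = {p : ℝ × ℝ | p ∈ Triangle ∧ 0 < p.2 ∧ p.2 ≤ Phi0 β γ iM p.1} := by
  have hb : 0 < γ / β := div_pos hγ hβ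
  ext p
  simp only [SafeZone, Set.mem_setOf_eq]
  constructor
  · rintro ⟨hT, s, i, hsol, hadm⟩
    exact ⟨hT, hT.2.2.1, SIRAux.sir_bound hβ hγ hT.1 hT.2.2.1 hsol hadm⟩
  · rintro ⟨hT, hpos, hle⟩
    refine ⟨hT, ?_⟩
    obtain ⟨s, i, hsol, hprop⟩ := SIRAux.sir_exists hβ hγ hT.1 hpos
    refine ⟨s, i, hsol, ?_⟩
    intro t ht
    obtain ⟨hspos, hsle, hieq⟩ := hprop t ht
    rw [hieq]
    rcases lt_or_ge p.1 (γ / β) with hcase | hcase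
    · have hPhi : Phi0 β γ iM p.1 = iM := if_pos hcase
      rw [hPhi] at hle
      have hF := SIRAux.F_le_of_le (b := γ / β) (i₀ := p.2) hspos hsle hcase.le hT.1
      linarith
    · have hPhi : Phi0 β γ iM p.1
          = γ / β + iM - p.1 + (γ / β) * (Real.log p.1 - Real.log (γ / β)) :=
        if_neg (not_lt.2 hcase)
      rw [hPhi] at hle
      have hpeak := SIRAux.F_le_peak (b := γ / β) (σ := s t) (i₀ := p.2) (s₀ := p.1)
        hb hspos hT.1
      have e1 := mul_sub (γ / β) (Real.log (γ / β)) (Real.log p.1)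
      have e2 := mul_sub (γ / β) (Real.log p.1) (Real.log (γ / β))
      linarith
end
end
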